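/- arXiv:1908.07351 — 5 statements merged into one kernel-verified Lean document; each statement's English description precedes it below -/
import Mathlib

section
/- The sampling theorem with derivatives is exact in the following sense: for every σ ∈ ℝⁿ with all σ_j > 0 and every k̃ ∈ Eⁿ there exists an entire function f̃ : ℂⁿ → ℂ of exponential type σ, not identically zero, whose restriction to ℝⁿ lies in L^p(ℝⁿ) for every 1 ≤ p ≤ ∞, such that (∂^k f̃)(2πu/σ) = 0 for every u ∈ ℤⁿ and every k ∈ Eⁿ with k ≠ k̃. Consequently, the sampling formula of Theorem 1.1 becomes false if the term corresponding to any single k̃ ∈ Eⁿ is omitted. -/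
open MeasureTheory Complex Real Filter

/-- Partial derivative of `f : ℂⁿ → ℂ` in the `j`-th coordinate direction. -/
noncomputable def pderivC {n : ℕ} (j : Fin n) (f : (Fin n → ℂ) → ℂ) : (Fin n → ℂ) → ℂ :=
  fun z => fderiv ℂ f z (Pi.single j 1)

/-- Mixed partial derivative `∂^k f` for a multi-index `k`. -/
noncomputable def mixedPartial {n : ℕ} (k : Fin n → ℕ) (f : (Fin n → ℂ) → ℂ) :
    (Fin n → ℂ) → ℂ :=
  (List.finRange n).foldr (fun j g => (pderivC j)^[k j] g) f

/-- The sample point `2πu/σ` viewed in `ℂⁿ`. -/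
noncomputable def samplePt {n : ℕ} (σ : Fin n → ℝ) (u : Fin n → ℤ) : Fin n → ℂ :=
  fun j => ((2 * Real.pi * (u j : ℝ) / σ j : ℝ) : ℂ)

noncomputable def sinc : ℂ → ℂ := dslope Complex.sin 0

lemma sinc_zero : _root_.sinc 0 = 1 := by
  simp [_root_.sinc, dslope_same, Complex.deriv_sin]

lemma sinc_apply {z : ℂ} (h : z ≠ 0) : _root_.sinc z = Complex.sin z / z := by
  rw [_root_.sinc, dslope_of_ne _ h, slope_def_field]
  simp

lemma differentiable_sinc : Differentiable ℂ _root_.sinc := by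
  intro z
  rcases eq_or_ne z 0 with rfl | h
  · have ha : AnalyticAt ℂ Complex.sin 0 :=
      (analyticOnNhd_univ_iff_differentiable.mpr Complex.differentiable_sin) 0 trivial
    obtain ⟨p, hp⟩ := ha
    exact (HasFPowerSeriesAt.has_fpower_series_dslope_fslope hp).analyticAt.differentiableAt
  · exact (differentiableAt_dslope_of_ne h).mpr (Complex.differentiable_sin z)

lemma sinc_neg (z : ℂ) : _root_.sinc (-z) = _root_.sinc z := by
  rcases eq_or_ne z 0 with rfl | h
  · simp
  · rw [sinc_apply (neg_ne_zero.mpr h), sinc_apply h, Complex.sin_neg, neg_div_neg_eq]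

lemma deriv_sinc_zero : deriv _root_.sinc 0 = 0 := by
  have h1 : deriv (fun z => _root_.sinc (-z)) 0 = -deriv _root_.sinc 0 := by
    rw [deriv_comp_neg]; simp
  have h2 : (fun z => _root_.sinc (-z)) = _root_.sinc := funext sinc_neg
  rw [h2] at h1
  linear_combination h1/2

lemma sinc_int_mul_pi (u : ℤ) (hu : u ≠ 0) : _root_.sinc ((u : ℂ) * (Real.pi : ℂ)) = 0 := by
  have hz : (u : ℂ) * (Real.pi : ℂ) ≠ 0 := by
    apply mul_ne_zero
    · exact_mod_cast Int.cast_ne_zero.mpr hu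
    · exact_mod_cast Complex.ofReal_ne_zero.mpr Real.pi_ne_zero
  rw [sinc_apply hz]
  have : Complex.sin ((u : ℂ) * (Real.pi : ℂ)) = 0 := by
    have := Real.sin_int_mul_pi u
    rw [show ((u : ℂ) * (Real.pi : ℂ)) = ((u * Real.pi : ℝ) : ℂ) by push_cast; ring,
      ← Complex.ofReal_sin, this, Complex.ofReal_zero]
  simp [this]

lemma norm_sin_le_exp (w : ℂ) : ‖Complex.sin w‖ ≤ Real.exp |w.im| := by
  rw [Complex.sin]
  have h1 : ‖Complex.exp (-w * I)‖ = Real.exp w.im := by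
    rw [Complex.norm_exp]; simp
  have h2 : ‖Complex.exp (w * I)‖ = Real.exp (-w.im) := by
    rw [Complex.norm_exp]; simp
  have e1 : Real.exp w.im ≤ Real.exp |w.im| := Real.exp_le_exp.mpr (le_abs_self _)
  have e2 : Real.exp (-w.im) ≤ Real.exp |w.im| := Real.exp_le_exp.mpr (neg_le_abs _)
  calc ‖(Complex.exp (-w * I) - Complex.exp (w * I)) * I / 2‖
      = ‖Complex.exp (-w * I) - Complex.exp (w * I)‖ / 2 := by
        rw [norm_div, norm_mul]; simp
    _ ≤ (Real.exp w.im + Real.exp (-w.im)) / 2 := by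
        have := norm_sub_le (Complex.exp (-w * I)) (Complex.exp (w * I))
        rw [h1, h2] at this; linarith
    _ ≤ Real.exp |w.im| := by linarith

lemma sinc_exp_bound : ∃ C : ℝ, 1 ≤ C ∧ ∀ w : ℂ, ‖_root_.sinc w‖ ≤ C * Real.exp |w.im| := by
  obtain ⟨C₀, hC₀⟩ := (isCompact_closedBall (0 : ℂ) 1).exists_bound_of_continuousOn
    differentiable_sinc.continuous.continuousOn
  refine ⟨max C₀ 1, le_max_right _ _, fun w => ?_⟩
  have hexp : (1 : ℝ) ≤ Real.exp |w.im| := Real.one_le_exp (abs_nonneg _)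
  rcases le_or_gt ‖w‖ 1 with h | h
  · have := hC₀ w (by simpa [Metric.mem_closedBall] using h)
    calc ‖_root_.sinc w‖ ≤ C₀ := this
      _ ≤ max C₀ 1 := le_max_left _ _
      _ ≤ max C₀ 1 * Real.exp |w.im| := by nlinarith [le_max_right C₀ 1]
  · have hw : w ≠ 0 := by
      intro hw; rw [hw] at h; simp at h; linarith
    rw [sinc_apply hw, norm_div]
    have h1 : ‖Complex.sin w‖ / ‖w‖ ≤ ‖Complex.sin w‖ := by
      rw [div_le_iff₀ (by linarith : (0:ℝ) < ‖w‖)]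
      nlinarith [norm_nonneg (Complex.sin w)]
    calc ‖Complex.sin w‖ / ‖w‖ ≤ ‖Complex.sin w‖ := h1
      _ ≤ Real.exp |w.im| := norm_sin_le_exp w
      _ ≤ max C₀ 1 * Real.exp |w.im| := by nlinarith [le_max_right C₀ 1]

lemma sinc_real_le_one (x : ℝ) : ‖_root_.sinc (x : ℂ)‖ ≤ 1 := by
  rcases eq_or_ne x 0 with rfl | h
  · simp [_root_.sinc_zero]
  · rw [sinc_apply (by exact_mod_cast Complex.ofReal_ne_zero.mpr h), ← Complex.ofReal_sin,
      norm_div]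
    rw [Complex.norm_real, Complex.norm_real]
    rw [Real.norm_eq_abs, Real.norm_eq_abs]
    rw [div_le_one (abs_pos.mpr h)]
    exact Real.abs_sin_le_abs

lemma sinc_real_decay {x : ℝ} (hx : x ≠ 0) : ‖_root_.sinc (x : ℂ)‖ ≤ |x|⁻¹ := by
  rw [sinc_apply (Complex.ofReal_ne_zero.mpr hx), ← Complex.ofReal_sin, norm_div,
    Complex.norm_real, Complex.norm_real, Real.norm_eq_abs, Real.norm_eq_abs,
    div_eq_mul_inv]
  have h1 : |Real.sin x| ≤ 1 := Real.abs_sin_le_one x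
  have h2 : (0:ℝ) ≤ |x|⁻¹ := inv_nonneg.mpr (abs_nonneg x)
  nlinarith [abs_nonneg (Real.sin x)]

/-- squared _root_.sinc decay on the real line: `‖_root_.sinc (b x)‖² ≤ K / (1 + x²)`. -/
lemma sinc_sq_decay {b : ℝ} (hb : 0 < b) (x : ℝ) :
    ‖_root_.sinc ((b : ℂ) * (x : ℂ))‖ ^ 2 ≤ max 2 (2 / b ^ 2) * (1 + x ^ 2)⁻¹ := by
  have hcast : (b : ℂ) * (x : ℂ) = ((b * x : ℝ) : ℂ) := by push_cast; ring
  rw [hcast]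
  set L := ‖_root_.sinc ((b * x : ℝ) : ℂ)‖ with hLdef
  have hL0 : 0 ≤ L := norm_nonneg _
  have hpos : (0:ℝ) < 1 + x ^ 2 := by positivity
  have hinv : (0:ℝ) < (1 + x ^ 2)⁻¹ := by positivity
  rcases le_or_gt (x ^ 2) 1 with h | h
  · have h1 : L ≤ 1 := sinc_real_le_one _
    have h2 : L ^ 2 ≤ 1 := by nlinarith
    have h3 : (1:ℝ) ≤ 2 * (1 + x ^ 2)⁻¹ := by
      calc (1:ℝ) = (1 + x ^ 2) * (1 + x ^ 2)⁻¹ := (mul_inv_cancel₀ hpos.ne').symm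
        _ ≤ 2 * (1 + x ^ 2)⁻¹ := by gcongr; linarith
    calc L ^ 2 ≤ 2 * (1 + x ^ 2)⁻¹ := by linarith
      _ ≤ max 2 (2 / b ^ 2) * (1 + x ^ 2)⁻¹ := by gcongr; exact le_max_left _ _
  · have hbx : b * x ≠ 0 := by
      have hx : x ≠ 0 := by intro h0; rw [h0] at h; norm_num at h
      exact mul_ne_zero hb.ne' hx
    have h1 : L ≤ |b * x|⁻¹ := sinc_real_decay hbx
    have h2 : L ^ 2 ≤ ((b * x) ^ 2)⁻¹ := by
      have e : |b * x|⁻¹ ^ 2 = ((b * x) ^ 2)⁻¹ := by rw [inv_pow, _root_.sq_abs]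
      nlinarith [inv_nonneg.mpr (abs_nonneg (b * x))]
    have h3 : ((b * x) ^ 2)⁻¹ ≤ 2 / b ^ 2 * (1 + x ^ 2)⁻¹ := by
      have e1 : ((b * x) ^ 2)⁻¹ = 1 / (b ^ 2 * x ^ 2) := by rw [mul_pow]; ring
      have e2 : 2 / b ^ 2 * (1 + x ^ 2)⁻¹ = 2 / (b ^ 2 * (1 + x ^ 2)) := by
        field_simp
      rw [e1, e2, div_le_div_iff₀ (by positivity) (by positivity)]
      nlinarith [sq_nonneg b, hb.le]
    calc L ^ 2 ≤ 2 / b ^ 2 * (1 + x ^ 2)⁻¹ := le_trans h2 h3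
      _ ≤ max 2 (2 / b ^ 2) * (1 + x ^ 2)⁻¹ := by gcongr; exact le_max_right _ _

lemma sin_int_mul_pi_c (u : ℤ) : Complex.sin ((u : ℂ) * (Real.pi : ℂ)) = 0 := by
  rw [show ((u : ℂ) * (Real.pi : ℂ)) = ((u * Real.pi : ℝ) : ℂ) by push_cast; ring,
    ← Complex.ofReal_sin, Real.sin_int_mul_pi, Complex.ofReal_zero]

noncomputable def g0 (s : ℝ) : ℂ → ℂ := fun z => (_root_.sinc (((s / 2 : ℝ) : ℂ) * z)) ^ 2

noncomputable def g1 (s : ℝ) : ℂ → ℂ := fun z =>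
  Complex.sin (((s / 2 : ℝ) : ℂ) * z) * (_root_.sinc (((s / 4 : ℝ) : ℂ) * z)) ^ 2

lemma differentiable_g0 (s : ℝ) : Differentiable ℂ (g0 s) := by
  apply Differentiable.pow
  exact differentiable_sinc.comp ((differentiable_id.const_mul _))

lemma differentiable_g1 (s : ℝ) : Differentiable ℂ (g1 s) := by
  apply Differentiable.mul
  · exact Complex.differentiable_sin.comp (differentiable_id.const_mul _)
  · exact (differentiable_sinc.comp (differentiable_id.const_mul _)).pow 2

lemma im_const_mul (a : ℝ) (z : ℂ) : (((a : ℝ) : ℂ) * z).im = a * z.im := by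
  simp [Complex.mul_im]

lemma g0_exp_bound {s : ℝ} (hs : 0 < s) :
    ∃ C : ℝ, 0 < C ∧ ∀ z : ℂ, ‖g0 s z‖ ≤ C * Real.exp (s * |z.im|) := by
  obtain ⟨C, hC1, hC⟩ := sinc_exp_bound
  refine ⟨C ^ 2, by positivity, fun z => ?_⟩
  have him : |(((s / 2 : ℝ) : ℂ) * z).im| = s / 2 * |z.im| := by
    rw [im_const_mul, abs_mul, abs_of_pos (by linarith)]
  have h := hC (((s / 2 : ℝ) : ℂ) * z)
  have hnn : (0:ℝ) ≤ ‖_root_.sinc (((s / 2 : ℝ) : ℂ) * z)‖ := norm_nonneg _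
  have hexp : Real.exp (s / 2 * |z.im|) ^ 2 = Real.exp (s * |z.im|) := by
    rw [← Real.exp_nat_mul]; ring_nf
  calc ‖g0 s z‖ = ‖_root_.sinc (((s / 2 : ℝ) : ℂ) * z)‖ ^ 2 := by rw [g0, norm_pow]
    _ ≤ (C * Real.exp (s / 2 * |z.im|)) ^ 2 := by
        apply pow_le_pow_left₀ hnn; rw [← him]; exact h
    _ = C ^ 2 * Real.exp (s * |z.im|) := by rw [mul_pow, hexp]

lemma g1_exp_bound {s : ℝ} (hs : 0 < s) :
    ∃ C : ℝ, 0 < C ∧ ∀ z : ℂ, ‖g1 s z‖ ≤ C * Real.exp (s * |z.im|) := by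
  obtain ⟨C, hC1, hC⟩ := sinc_exp_bound
  refine ⟨C ^ 2, by positivity, fun z => ?_⟩
  have him2 : |(((s / 2 : ℝ) : ℂ) * z).im| = s / 2 * |z.im| := by
    rw [im_const_mul, abs_mul, abs_of_pos (by linarith)]
  have him4 : |(((s / 4 : ℝ) : ℂ) * z).im| = s / 4 * |z.im| := by
    rw [im_const_mul, abs_mul, abs_of_pos (by linarith)]
  have h1 : ‖Complex.sin (((s / 2 : ℝ) : ℂ) * z)‖ ≤ Real.exp (s / 2 * |z.im|) := by
    rw [← him2]; exact norm_sin_le_exp _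
  have h2 : ‖_root_.sinc (((s / 4 : ℝ) : ℂ) * z)‖ ≤ C * Real.exp (s / 4 * |z.im|) := by
    rw [← him4]; exact hC _
  have hnn : (0:ℝ) ≤ ‖_root_.sinc (((s / 4 : ℝ) : ℂ) * z)‖ := norm_nonneg _
  have hexp : Real.exp (s / 2 * |z.im|) * (Real.exp (s / 4 * |z.im|)) ^ 2
      = Real.exp (s * |z.im|) := by
    rw [← Real.exp_nat_mul, ← Real.exp_add]; ring_nf
  calc ‖g1 s z‖ = ‖Complex.sin (((s / 2 : ℝ) : ℂ) * z)‖ * ‖_root_.sinc (((s / 4 : ℝ) : ℂ) * z)‖ ^ 2 := by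
        rw [g1, norm_mul, norm_pow]
    _ ≤ Real.exp (s / 2 * |z.im|) * (C * Real.exp (s / 4 * |z.im|)) ^ 2 := by
        apply mul_le_mul h1 (pow_le_pow_left₀ hnn h2 2) (by positivity) (by positivity)
    _ = C ^ 2 * Real.exp (s * |z.im|) := by rw [mul_pow, ← hexp]; ring

lemma g0_decay {s : ℝ} (hs : 0 < s) :
    ∃ D : ℝ, 0 < D ∧ ∀ x : ℝ, ‖g0 s ((x : ℝ) : ℂ)‖ ≤ D * (1 + x ^ 2)⁻¹ := by
  refine ⟨max 2 (2 / (s / 2) ^ 2), lt_max_of_lt_left two_pos, fun x => ?_⟩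
  have := sinc_sq_decay (b := s / 2) (by linarith) x
  rw [g0, norm_pow]
  exact this

lemma g1_decay {s : ℝ} (hs : 0 < s) :
    ∃ D : ℝ, 0 < D ∧ ∀ x : ℝ, ‖g1 s ((x : ℝ) : ℂ)‖ ≤ D * (1 + x ^ 2)⁻¹ := by
  refine ⟨max 2 (2 / (s / 4) ^ 2), lt_max_of_lt_left two_pos, fun x => ?_⟩
  have h2 := sinc_sq_decay (b := s / 4) (by linarith) x
  have h1 : ‖Complex.sin (((s / 2 : ℝ) : ℂ) * (x : ℂ))‖ ≤ 1 := by
    rw [show (((s / 2 : ℝ) : ℂ) * (x : ℂ)) = ((s / 2 * x : ℝ) : ℂ) by push_cast; ring,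
      ← Complex.ofReal_sin, Complex.norm_real, Real.norm_eq_abs]
    exact Real.abs_sin_le_one _
  rw [g1, norm_mul, norm_pow]
  calc ‖Complex.sin (((s / 2 : ℝ) : ℂ) * (x : ℂ))‖ * ‖_root_.sinc (((s / 4 : ℝ) : ℂ) * (x : ℂ))‖ ^ 2
      ≤ 1 * (max 2 (2 / (s / 4) ^ 2) * (1 + x ^ 2)⁻¹) := by
        apply mul_le_mul h1 h2 (by positivity) (by norm_num)
    _ = max 2 (2 / (s / 4) ^ 2) * (1 + x ^ 2)⁻¹ := one_mul _

lemma sample_cast {s : ℝ} (hs : 0 < s) (u : ℤ) (c : ℝ) :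
    ((c * s : ℝ) : ℂ) * ((2 * Real.pi * (u : ℝ) / s : ℝ) : ℂ)
      = (u : ℂ) * ((2 * c * Real.pi : ℝ) : ℂ) := by
  have h : (s : ℂ) ≠ 0 := Complex.ofReal_ne_zero.mpr hs.ne'
  push_cast
  field_simp

lemma half_sample_cast {s : ℝ} (hs : 0 < s) (u : ℤ) :
    (((s / 2 : ℝ)) : ℂ) * ((2 * Real.pi * (u : ℝ) / s : ℝ) : ℂ)
      = (u : ℂ) * (Real.pi : ℂ) := by
  have h : (s : ℂ) ≠ 0 := Complex.ofReal_ne_zero.mpr hs.ne'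
  push_cast
  field_simp

lemma g1_sample {s : ℝ} (hs : 0 < s) (u : ℤ) :
    g1 s ((2 * Real.pi * (u : ℝ) / s : ℝ) : ℂ) = 0 := by
  rw [g1, half_sample_cast hs u, sin_int_mul_pi_c, zero_mul]

lemma hasDerivAt_g0 (s : ℝ) (z : ℂ) :
    HasDerivAt (g0 s)
      (2 * _root_.sinc (((s / 2 : ℝ) : ℂ) * z) ^ 1 * (deriv _root_.sinc (((s / 2 : ℝ) : ℂ) * z)
        * ((s / 2 : ℝ) : ℂ))) z := by
  have hinner : HasDerivAt (fun w : ℂ => ((s / 2 : ℝ) : ℂ) * w) (((s / 2 : ℝ) : ℂ)) z := by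
    simpa using (hasDerivAt_id z).const_mul (((s / 2 : ℝ) : ℂ))
  have houter : HasDerivAt _root_.sinc (deriv _root_.sinc (((s / 2 : ℝ) : ℂ) * z)) (((s / 2 : ℝ) : ℂ) * z) :=
    (differentiable_sinc _).hasDerivAt
  have hcomp := houter.comp z hinner
  exact hcomp.pow 2

lemma deriv_g0_sample {s : ℝ} (hs : 0 < s) (u : ℤ) :
    deriv (g0 s) ((2 * Real.pi * (u : ℝ) / s : ℝ) : ℂ) = 0 := by
  rw [(hasDerivAt_g0 s _).deriv, half_sample_cast hs u]
  rcases eq_or_ne u 0 with rfl | hu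
  · simp [deriv_sinc_zero]
  · rw [sinc_int_mul_pi u hu]
    ring

lemma g0_at_zero (s : ℝ) : g0 s 0 = 1 := by
  rw [g0]; simp [_root_.sinc_zero]

lemma g1_nonzero {s : ℝ} (hs : 0 < s) : g1 s ((Real.pi / s : ℝ) : ℂ) ≠ 0 := by
  have h : (s : ℂ) ≠ 0 := Complex.ofReal_ne_zero.mpr hs.ne'
  have e2 : (((s / 2 : ℝ)) : ℂ) * ((Real.pi / s : ℝ) : ℂ) = ((Real.pi / 2 : ℝ) : ℂ) := by
    push_cast; field_simp
  have e4 : (((s / 4 : ℝ)) : ℂ) * ((Real.pi / s : ℝ) : ℂ) = ((Real.pi / 4 : ℝ) : ℂ) := by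
    push_cast; field_simp
  rw [g1, e2, e4]
  apply mul_ne_zero
  · rw [← Complex.ofReal_sin, Real.sin_pi_div_two]
    norm_num
  · apply pow_ne_zero
    have hne : ((Real.pi / 4 : ℝ) : ℂ) ≠ 0 := by
      simp [Real.pi_ne_zero, Real.pi_pos.ne']
    rw [sinc_apply hne, ← Complex.ofReal_sin, Real.sin_pi_div_four]
    apply div_ne_zero
    · norm_num [Real.sq_sqrt]
    · exact hne

lemma differentiable_iteratedDeriv {g : ℂ → ℂ} (hg : Differentiable ℂ g) (m : ℕ) :
    Differentiable ℂ (iteratedDeriv m g) := by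
  induction m with
  | zero => simpa [iteratedDeriv_zero] using hg
  | succ m ih =>
    rw [iteratedDeriv_succ]
    exact analyticOnNhd_univ_iff_differentiable.mp
      ((analyticOnNhd_univ_iff_differentiable.mpr ih).deriv)

/-- Product-form functions on `ℂⁿ`. -/
noncomputable def prodFun {n : ℕ} (h : Fin n → ℂ → ℂ) : (Fin n → ℂ) → ℂ :=
  fun z => ∏ i, h i (z i)

lemma differentiable_prodFun {n : ℕ} (h : Fin n → ℂ → ℂ) (hd : ∀ i, Differentiable ℂ (h i)) :
    Differentiable ℂ (prodFun h) := by
  intro z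
  have hfact : ∀ i : Fin n, HasFDerivAt (fun w : Fin n → ℂ => h i (w i))
      ((deriv (h i) (z i)) • (ContinuousLinearMap.proj i : (Fin n → ℂ) →L[ℂ] ℂ)) z := by
    intro i
    have hproj : HasFDerivAt (fun w : Fin n → ℂ => w i)
        (ContinuousLinearMap.proj i : (Fin n → ℂ) →L[ℂ] ℂ) z :=
      (ContinuousLinearMap.proj i : (Fin n → ℂ) →L[ℂ] ℂ).hasFDerivAt
    exact ((hd i (z i)).hasDerivAt).comp_hasFDerivAt z hproj
  exact (HasFDerivAt.finset_prod (fun i _ => hfact i)).differentiableAt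

lemma pderivC_prodFun {n : ℕ} (h : Fin n → ℂ → ℂ) (hd : ∀ i, Differentiable ℂ (h i))
    (j : Fin n) :
    pderivC j (prodFun h) = prodFun (Function.update h j (deriv (h j))) := by
  funext z
  have hfact : ∀ i : Fin n, HasFDerivAt (fun w : Fin n → ℂ => h i (w i))
      ((deriv (h i) (z i)) • (ContinuousLinearMap.proj i : (Fin n → ℂ) →L[ℂ] ℂ)) z := by
    intro i
    have hproj : HasFDerivAt (fun w : Fin n → ℂ => w i)
        (ContinuousLinearMap.proj i : (Fin n → ℂ) →L[ℂ] ℂ) z :=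
      (ContinuousLinearMap.proj i : (Fin n → ℂ) →L[ℂ] ℂ).hasFDerivAt
    exact ((hd i (z i)).hasDerivAt).comp_hasFDerivAt z hproj
  have hF : HasFDerivAt (prodFun h)
      (∑ i, (∏ l ∈ Finset.univ.erase i, h l (z l)) •
        ((deriv (h i) (z i)) • (ContinuousLinearMap.proj i : (Fin n → ℂ) →L[ℂ] ℂ))) z := by
    exact HasFDerivAt.finset_prod (fun i _ => hfact i)
  rw [pderivC, hF.fderiv]
  rw [ContinuousLinearMap.sum_apply]
  have hterm : ∀ i : Fin n, i ≠ j →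
      ((∏ l ∈ Finset.univ.erase i, h l (z l)) •
        ((deriv (h i) (z i)) • (ContinuousLinearMap.proj i : (Fin n → ℂ) →L[ℂ] ℂ)))
        (Pi.single j 1) = 0 := by
    intro i hij
    rw [ContinuousLinearMap.smul_apply, ContinuousLinearMap.smul_apply,
      ContinuousLinearMap.proj_apply, Pi.single_eq_of_ne hij]
    simp
  rw [Finset.sum_eq_single j (fun i _ hij => hterm i hij) (by simp)]
  have hj : ((∏ l ∈ Finset.univ.erase j, h l (z l)) •
      ((deriv (h j) (z j)) • (ContinuousLinearMap.proj j : (Fin n → ℂ) →L[ℂ] ℂ)))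
      (Pi.single j 1) = (∏ l ∈ Finset.univ.erase j, h l (z l)) * deriv (h j) (z j) := by
    rw [ContinuousLinearMap.smul_apply, ContinuousLinearMap.smul_apply,
      ContinuousLinearMap.proj_apply, Pi.single_eq_same]
    simp [mul_comm]
  rw [hj, prodFun]
  rw [← Finset.mul_prod_erase Finset.univ _ (Finset.mem_univ j), Function.update_self, mul_comm]
  congr 1
  apply Finset.prod_congr rfl
  intro l hl
  rw [Function.update_of_ne (Finset.ne_of_mem_erase hl)]

lemma pderivC_prodFun_iter {n : ℕ} (h : Fin n → ℂ → ℂ) (hd : ∀ i, Differentiable ℂ (h i))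
    (m : Fin n → ℕ) (j : Fin n) (t : ℕ) :
    (pderivC j)^[t] (prodFun (fun i => iteratedDeriv (m i) (h i)))
      = prodFun (fun i => iteratedDeriv (Function.update m j (m j + t) i) (h i)) := by
  induction t with
  | zero =>
    simp only [Function.iterate_zero, id_eq, add_zero]
    have hfam : (fun i => iteratedDeriv (Function.update m j (m j) i) (h i))
        = fun i => iteratedDeriv (m i) (h i) := by
      funext i
      rcases eq_or_ne i j with rfl | hij
      · rw [Function.update_self]
      · rw [Function.update_of_ne hij]
    rw [hfam]
  | succ t ih =>
    rw [Function.iterate_succ_apply', ih,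
      pderivC_prodFun (fun i => iteratedDeriv (Function.update m j (m j + t) i) (h i))
        (fun i => differentiable_iteratedDeriv (hd i) _) j]
    have hfam : Function.update (fun i => iteratedDeriv (Function.update m j (m j + t) i) (h i)) j
          (deriv (iteratedDeriv (Function.update m j (m j + t) j) (h j)))
        = fun i => iteratedDeriv (Function.update m j (m j + (t + 1)) i) (h i) := by
      funext i
      rcases eq_or_ne i j with rfl | hij
      · rw [Function.update_self, Function.update_self, Function.update_self,
          ← iteratedDeriv_succ, ← add_assoc]
      · rw [Function.update_of_ne hij, Function.update_of_ne hij, Function.update_of_ne hij]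
    rw [hfam]

lemma foldr_pderivC {n : ℕ} (h : Fin n → ℂ → ℂ) (hd : ∀ i, Differentiable ℂ (h i))
    (k : Fin n → ℕ) (L : List (Fin n)) (m : Fin n → ℕ) :
    L.foldr (fun j g => (pderivC j)^[k j] g) (prodFun (fun i => iteratedDeriv (m i) (h i)))
      = prodFun (fun i => iteratedDeriv (m i + L.count i * k i) (h i)) := by
  induction L generalizing m with
  | nil => simp
  | cons j tl ih =>
    rw [List.foldr_cons, ih, pderivC_prodFun_iter h hd _ j (k j)]
    have hfam : (fun i => iteratedDeriv
          (Function.update (fun i => m i + tl.count i * k i) j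
            (m j + tl.count j * k j + k j) i) (h i))
        = fun i => iteratedDeriv (m i + (j :: tl).count i * k i) (h i) := by
      funext i
      rcases eq_or_ne i j with rfl | hij
      · rw [Function.update_self, List.count_cons_self]
        ring_nf
      · rw [Function.update_of_ne hij, List.count_cons_of_ne hij.symm]
    rw [hfam]

lemma mixedPartial_prodFun {n : ℕ} (h : Fin n → ℂ → ℂ) (hd : ∀ i, Differentiable ℂ (h i))
    (k : Fin n → ℕ) :
    mixedPartial k (prodFun h) = prodFun (fun i => iteratedDeriv (k i) (h i)) := by
  have h0 : prodFun h = prodFun (fun i => iteratedDeriv ((fun _ : Fin n => 0) i) (h i)) := by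
    simp [iteratedDeriv_zero]
  rw [mixedPartial, h0, foldr_pderivC h hd k (List.finRange n) (fun _ => 0)]
  have hfam : (fun i : Fin n => iteratedDeriv (0 + (List.finRange n).count i * k i) (h i))
      = fun i => iteratedDeriv (k i) (h i) := by
    funext i
    rw [List.count_eq_one_of_mem (List.nodup_finRange n) (List.mem_finRange i)]
    ring_nf
  rw [hfam]

/-- Exactness of the sampling theorem with derivatives: for every `k̃ ∈ Eⁿ` there is a
nonzero entire function `f̃` of exponential type `σ`, lying in `L^p(ℝⁿ)` for every
`1 ≤ p ≤ ∞`, all of whose sample data `∂^k f̃ (2πu/σ)` with `k ∈ Eⁿ`, `k ≠ k̃`, vanish. -/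
theorem sampling_with_derivatives_exact {n : ℕ}
    (σ : Fin n → ℝ) (hσ : ∀ j, 0 < σ j) (ktil : Fin n → Fin 2) :
    ∃ f : (Fin n → ℂ) → ℂ,
      Differentiable ℂ f ∧
      (∃ C, ∀ z, ‖f z‖ ≤ C * Real.exp (∑ j, σ j * |(z j).im|)) ∧
      f ≠ 0 ∧
      (∀ q : ENNReal, 1 ≤ q →
        MemLp (fun x : Fin n → ℝ => f (fun j => (x j : ℂ))) q volume) ∧
      (∀ u : Fin n → ℤ, ∀ k : Fin n → Fin 2, k ≠ ktil →
        mixedPartial (fun j => (k j : ℕ)) f (samplePt σ u) = 0) := by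
  classical
  set G : Fin n → ℂ → ℂ := fun j => if ktil j = 0 then g0 (σ j) else g1 (σ j) with hGdef
  have hGdiff : ∀ j, Differentiable ℂ (G j) := by
    intro j
    by_cases h : ktil j = 0 <;> simp only [hGdef, h, if_true, if_false, reduceIte] <;>
      first
        | exact differentiable_g0 (σ j)
        | exact differentiable_g1 (σ j)
  refine ⟨prodFun G, ?_, ?_, ?_, ?_, ?_⟩
  · -- differentiability
    exact differentiable_prodFun G hGdiff
  · -- exponential type
    have hC : ∀ j, ∃ C : ℝ, 0 < C ∧ ∀ z : ℂ, ‖G j z‖ ≤ C * Real.exp (σ j * |z.im|) := by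
      intro j
      by_cases h : ktil j = 0 <;> simp only [hGdef, h, if_true, if_false, reduceIte]
      · exact g0_exp_bound (hσ j)
      · exact g1_exp_bound (hσ j)
    choose C hCpos hCle using hC
    refine ⟨∏ j, C j, fun z => ?_⟩
    have h1 : ‖prodFun G z‖ = ∏ j, ‖G j (z j)‖ := by
      rw [prodFun, norm_prod]
    rw [h1]
    calc ∏ j, ‖G j (z j)‖ ≤ ∏ j, C j * Real.exp (σ j * |(z j).im|) :=
          Finset.prod_le_prod (fun j _ => norm_nonneg _) (fun j _ => hCle j (z j))
      _ = (∏ j, C j) * ∏ j, Real.exp (σ j * |(z j).im|) := Finset.prod_mul_distrib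
      _ = (∏ j, C j) * Real.exp (∑ j, σ j * |(z j).im|) := by rw [Real.exp_sum]
  · -- nonvanishing
    intro h0
    have hz : prodFun G (fun j => if ktil j = 0 then 0 else ((Real.pi / σ j : ℝ) : ℂ)) = 0 := by
      rw [h0]; rfl
    rw [prodFun, Finset.prod_eq_zero_iff] at hz
    obtain ⟨j, -, hj⟩ := hz
    by_cases h : ktil j = 0
    · rw [hGdef] at hj
      simp only [h, if_true, reduceIte] at hj
      rw [g0_at_zero] at hj
      exact one_ne_zero hj
    · rw [hGdef] at hj
      simp only [h, if_false, reduceIte] at hj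
      exact g1_nonzero (hσ j) hj
  · -- Memℒp
    intro q hq
    have hq0 : q ≠ 0 := by
      intro h; rw [h] at hq; norm_num at hq
    have hD : ∀ j, ∃ D : ℝ, 0 < D ∧ ∀ x : ℝ, ‖G j ((x : ℝ) : ℂ)‖ ≤ D * (1 + x ^ 2)⁻¹ := by
      intro j
      by_cases h : ktil j = 0 <;> simp only [hGdef, h, if_true, if_false, reduceIte]
      · exact g0_decay (hσ j)
      · exact g1_decay (hσ j)
    choose D hDpos hDle using hD
    have hcont : Continuous (fun x : Fin n → ℝ => prodFun G (fun j => (x j : ℂ))) := by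
      apply continuous_finset_prod
      intro i _
      exact (hGdiff i).continuous.comp
        (Complex.continuous_ofReal.comp (continuous_apply i))
    have hmeas := hcont.aestronglyMeasurable (μ := (volume : Measure (Fin n → ℝ)))
    have hbound : ∀ x : Fin n → ℝ,
        ‖prodFun G (fun j => (x j : ℂ))‖ ≤ ∏ j, D j * (1 + (x j) ^ 2)⁻¹ := by
      intro x
      rw [prodFun, norm_prod]
      exact Finset.prod_le_prod (fun j _ => norm_nonneg _) (fun j _ => hDle j (x j))
    rcases eq_or_ne q ⊤ with rfl | hqtop
    · apply memLp_top_of_bound hmeas (∏ j, D j)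
      filter_upwards with x
      refine le_trans (hbound x) (Finset.prod_le_prod
        (fun j _ => mul_nonneg (hDpos j).le (by positivity)) ?_)
      intro j _
      have h1 : (1 + (x j) ^ 2)⁻¹ ≤ 1 := by
        rw [inv_le_one_iff₀]; right; nlinarith [sq_nonneg (x j)]
      nlinarith [hDpos j, sq_nonneg (x j), inv_nonneg.mpr (by positivity : (0:ℝ) ≤ 1 + (x j)^2)]
    · set p := q.toReal with hpdef
      have hp1 : 1 ≤ p := by
        rw [hpdef, ← ENNReal.toReal_one]
        exact ENNReal.toReal_mono hqtop hq
      have hp0 : 0 ≤ p := by linarith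
      rw [← memLp_norm_rpow_iff hmeas hq0 hqtop, ENNReal.div_self hq0 hqtop,
        memLp_one_iff_integrable]
      have hint : Integrable (fun x : Fin n → ℝ => ∏ j, D j ^ p * (1 + (x j) ^ 2)⁻¹) := by
        apply Integrable.fintype_prod (f := fun j (t : ℝ) => D j ^ p * (1 + t ^ 2)⁻¹)
        intro j
        exact integrable_inv_one_add_sq.const_mul _
      apply hint.mono
      · apply Continuous.aestronglyMeasurable
        exact (hcont.norm).rpow_const (fun x => Or.inr hp0)
      · filter_upwards with x
        have hWpos : ∀ j : Fin n, (0:ℝ) < (1 + (x j) ^ 2)⁻¹ := fun j => by positivity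
        have h2 : ‖prodFun G (fun j => (x j : ℂ))‖ ^ p
            ≤ (∏ j, D j * (1 + (x j) ^ 2)⁻¹) ^ p :=
          Real.rpow_le_rpow (norm_nonneg _) (hbound x) hp0
        have h3 : (∏ j, D j * (1 + (x j) ^ 2)⁻¹) ^ p
            = ∏ j, (D j * (1 + (x j) ^ 2)⁻¹) ^ p :=
          (Real.finset_prod_rpow _ _ (fun j _ => mul_nonneg (hDpos j).le (by positivity)) p).symm
        have h4 : ∀ j : Fin n, (D j * (1 + (x j) ^ 2)⁻¹) ^ p ≤ D j ^ p * (1 + (x j) ^ 2)⁻¹ := by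
          intro j
          rw [Real.mul_rpow (hDpos j).le (hWpos j).le]
          apply mul_le_mul_of_nonneg_left _ (Real.rpow_nonneg (hDpos j).le p)
          calc ((1 + (x j) ^ 2)⁻¹) ^ p ≤ ((1 + (x j) ^ 2)⁻¹) ^ (1:ℝ) := by
                apply Real.rpow_le_rpow_of_exponent_ge (hWpos j)
                · rw [inv_le_one_iff₀]; right; nlinarith [sq_nonneg (x j)]
                · exact hp1
            _ = (1 + (x j) ^ 2)⁻¹ := Real.rpow_one _
        have h5 : ∏ j, (D j * (1 + (x j) ^ 2)⁻¹) ^ p ≤ ∏ j, D j ^ p * (1 + (x j) ^ 2)⁻¹ :=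
          Finset.prod_le_prod
            (fun j _ => Real.rpow_nonneg (mul_nonneg (hDpos j).le (hWpos j).le) p)
            (fun j _ => h4 j)
        have h6 : (0:ℝ) ≤ ∏ j, D j ^ p * (1 + (x j) ^ 2)⁻¹ :=
          Finset.prod_nonneg fun j _ =>
            mul_nonneg (Real.rpow_nonneg (hDpos j).le p) (hWpos j).le
        rw [Real.norm_eq_abs, Real.norm_eq_abs,
          _root_.abs_of_nonneg (Real.rpow_nonneg (norm_nonneg _) p),
          _root_.abs_of_nonneg h6]
        calc ‖prodFun G (fun j => (x j : ℂ))‖ ^ p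
            ≤ (∏ j, D j * (1 + (x j) ^ 2)⁻¹) ^ p := h2
          _ = ∏ j, (D j * (1 + (x j) ^ 2)⁻¹) ^ p := h3
          _ ≤ ∏ j, D j ^ p * (1 + (x j) ^ 2)⁻¹ := h5
  · -- sample vanishing
    intro u k hk
    rw [mixedPartial_prodFun G hGdiff]
    obtain ⟨j, hj⟩ := Function.ne_iff.mp hk
    apply Finset.prod_eq_zero (Finset.mem_univ j)
    have hfin2 : ∀ a : Fin 2, a = 0 ∨ a = 1 := by decide
    have hsample : samplePt σ u j = ((2 * Real.pi * ((u j : ℤ) : ℝ) / σ j : ℝ) : ℂ) := rfl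
    by_cases h : ktil j = 0
    · have hk1 : (k j : ℕ) = 1 := by
        rcases hfin2 (k j) with h1 | h1
        · exact absurd (h1.trans h.symm) hj
        · rw [h1]; rfl
      rw [hGdef]
      simp only [h, if_true, reduceIte]
      rw [hk1, iteratedDeriv_one, hsample]
      exact deriv_g0_sample (hσ j) (u j)
    · have hk0 : (k j : ℕ) = 0 := by
        rcases hfin2 (ktil j) with h1 | h1
        · exact absurd h1 h
        · rcases hfin2 (k j) with h2 | h2
          · rw [h2]; rfl
          · exact absurd (h2.trans h1.symm) hj
      rw [hGdef]
      simp only [h, if_false, reduceIte]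
      rw [hk0, iteratedDeriv_zero, hsample]
      exact g1_sample (hσ j) (u j)
end

section
/- For every σ ∈ ℝ² with σ_1, σ_2 > 0 there exists an entire function f : ℂ² → ℂ of exponential type σ, not identically zero, whose restriction to ℝ² lies in L^p(ℝ²) for every 1 ≤ p ≤ ∞, such that f(2πu/σ) = 0 and (∂^m f/∂z_j^m)(2πu/σ) = 0 for all u ∈ ℤ², for j = 1, 2, and for all integers m ≥ 1. In particular, a two-dimensional sampling series involving only f and its pure (non-mixed) partial derivatives at the points 2πu/σ cannot reconstruct every such f. -/
open MeasureTheory Complex Real Filter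

noncomputable def Ssinc : ℂ → ℂ := dslope Complex.sin 0

lemma Ssinc_diff : Differentiable ℂ Ssinc := by
  have : DifferentiableOn ℂ (dslope Complex.sin 0) Set.univ :=
    (Complex.differentiableOn_dslope (by simp)).mpr Complex.differentiable_sin.differentiableOn
  rw [← differentiableOn_univ]; exact this

lemma Ssinc_apply {w : ℂ} (hw : w ≠ 0) : Ssinc w = Complex.sin w / w := by
  rw [Ssinc, dslope_of_ne _ hw, slope_def_field]
  simp [div_eq_mul_inv]

lemma Ssinc_zero : Ssinc 0 = 1 := by
  simp [Ssinc, Complex.deriv_sin]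

lemma Ssinc_int (n : ℤ) (hn : n ≠ 0) : Ssinc ((n : ℂ) * (Real.pi : ℂ)) = 0 := by
  have hw : (n : ℂ) * (Real.pi : ℂ) ≠ 0 :=
    mul_ne_zero (Int.cast_ne_zero.mpr hn) (Complex.ofReal_ne_zero.mpr Real.pi_ne_zero)
  rw [Ssinc_apply hw, Complex.sin_int_mul_pi, zero_div]

lemma Ssinc_ne_zero {w : ℂ} (h : w.im ≠ 0) : Ssinc w ≠ 0 := by
  have hw : w ≠ 0 := fun h0 => h (by simp [h0])
  rw [Ssinc_apply hw]
  refine div_ne_zero ?_ hw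
  intro hs
  rcases Complex.sin_eq_zero_iff.mp hs with ⟨k, hk⟩
  apply h
  rw [hk]
  simp



lemma norm_sin_le (z : ℂ) : ‖Complex.sin z‖ ≤ Real.exp |z.im| := by
  rw [Complex.sin]
  have h1 : ‖Complex.exp (-z * I) - Complex.exp (z * I)‖ ≤
      Real.exp z.im + Real.exp (-z.im) := by
    refine (norm_sub_le _ _).trans ?_
    have e1 : ‖Complex.exp (-z * I)‖ = Real.exp z.im := by
      rw [Complex.norm_exp]; simp
    have e2 : ‖Complex.exp (z * I)‖ = Real.exp (-z.im) := by
      rw [Complex.norm_exp]; simp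
    rw [e1, e2]
  calc ‖(Complex.exp (-z * I) - Complex.exp (z * I)) * I / 2‖
      = ‖Complex.exp (-z * I) - Complex.exp (z * I)‖ / 2 := by
        rw [norm_div, norm_mul]; simp
    _ ≤ (Real.exp z.im + Real.exp (-z.im)) / 2 := by linarith
    _ ≤ Real.exp |z.im| := by
        rcases abs_cases z.im with ⟨h, _⟩ | ⟨h, _⟩
        · rw [h]
          have : Real.exp (-z.im) ≤ Real.exp z.im := Real.exp_le_exp.mpr (by linarith [abs_nonneg z.im, le_abs_self z.im, neg_abs_le z.im])
          linarith
        · rw [h]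
          have : Real.exp z.im ≤ Real.exp (-z.im) := Real.exp_le_exp.mpr (by linarith [neg_abs_le z.im, le_abs_self z.im])
          linarith

lemma Ssinc_growth : ∃ C : ℝ, 1 ≤ C ∧ ∀ w : ℂ, ‖Ssinc w‖ ≤ C * Real.exp |w.im| := by
  obtain ⟨M, hM⟩ := (isCompact_closedBall (0 : ℂ) 1).exists_bound_of_continuousOn
    Ssinc_diff.continuous.continuousOn
  refine ⟨max M 1, le_max_right _ _, fun w => ?_⟩
  have hC0 : (0:ℝ) ≤ max M 1 := le_trans zero_le_one (le_max_right _ _)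
  have hexp : 1 ≤ Real.exp |w.im| := Real.one_le_exp (abs_nonneg _)
  by_cases hw : ‖w‖ ≤ 1
  · have : ‖Ssinc w‖ ≤ M := hM w (by simpa [Metric.mem_closedBall] using hw)
    calc ‖Ssinc w‖ ≤ max M 1 := this.trans (le_max_left _ _)
      _ = max M 1 * 1 := (mul_one _).symm
      _ ≤ max M 1 * Real.exp |w.im| := by gcongr
  · push_neg at hw
    have hw0 : w ≠ 0 := by intro h; rw [h] at hw; simp at hw; linarith
    rw [Ssinc_apply hw0, norm_div]
    have : ‖Complex.sin w‖ / ‖w‖ ≤ ‖Complex.sin w‖ := by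
      apply div_le_self (norm_nonneg _) (le_of_lt hw)
    refine this.trans ((norm_sin_le w).trans ?_)
    calc Real.exp |w.im| = 1 * Real.exp |w.im| := (one_mul _).symm
      _ ≤ max M 1 * Real.exp |w.im| := by gcongr; exact le_max_right _ _

lemma norm_Ssinc_real_le_one (x : ℝ) : ‖Ssinc (x : ℂ)‖ ≤ 1 := by
  by_cases hx : x = 0
  · simp [hx, Ssinc_zero]
  · rw [Ssinc_apply (by exact_mod_cast Complex.ofReal_ne_zero.mpr hx), norm_div]
    rw [← Complex.ofReal_sin, Complex.norm_real, Complex.norm_real]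
    rw [div_le_one (by simpa using abs_pos.mpr hx)]
    simpa using Real.abs_sin_le_abs (x := x)

lemma norm_Ssinc_real_le_inv (x : ℝ) (hx : x ≠ 0) : ‖Ssinc (x : ℂ)‖ ≤ 1 / |x| := by
  rw [Ssinc_apply (by exact_mod_cast Complex.ofReal_ne_zero.mpr hx), norm_div]
  rw [← Complex.ofReal_sin, Complex.norm_real, Complex.norm_real]
  rw [Real.norm_eq_abs, Real.norm_eq_abs]
  gcongr
  exact Real.abs_sin_le_one x

noncomputable def gfun (b : ℝ) : ℂ → ℂ :=
  fun z => Ssinc ((b : ℂ) * z - (Real.pi : ℂ)) * Ssinc ((b : ℂ) * z + (Real.pi : ℂ))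


lemma gfun_diff (b : ℝ) : Differentiable ℂ (gfun b) := by
  have d1 : Differentiable ℂ (fun z : ℂ => (b : ℂ) * z - (Real.pi : ℂ)) :=
    (differentiable_id.const_mul _).sub_const _
  have d2 : Differentiable ℂ (fun z : ℂ => (b : ℂ) * z + (Real.pi : ℂ)) :=
    (differentiable_id.const_mul _).add_const _
  exact (Ssinc_diff.comp d1).mul (Ssinc_diff.comp d2)

lemma gfun_zero_of (b : ℝ) (t : ℝ) (k : ℤ) (ht : b * t = Real.pi * k) : gfun b (t : ℂ) = 0 := by
  have harg : (b : ℂ) * (t : ℂ) = (k : ℂ) * (Real.pi : ℂ) := by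
    rw [← Complex.ofReal_mul, ht]; push_cast; ring
  rw [gfun, harg]
  by_cases hk : k = 1
  · have : (k : ℂ) * (Real.pi : ℂ) + (Real.pi : ℂ) = ((k + 1 : ℤ) : ℂ) * (Real.pi : ℂ) := by
      push_cast; ring
    rw [this, Ssinc_int (k + 1) (by omega), mul_zero]
  · have : (k : ℂ) * (Real.pi : ℂ) - (Real.pi : ℂ) = ((k - 1 : ℤ) : ℂ) * (Real.pi : ℂ) := by
      push_cast; ring
    rw [this, Ssinc_int (k - 1) (by omega), zero_mul]

lemma gfun_ne_zero (b : ℝ) (hb : b ≠ 0) : gfun b (I / (b : ℂ)) ≠ 0 := by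
  have hbc : (b : ℂ) ≠ 0 := Complex.ofReal_ne_zero.mpr hb
  have harg : (b : ℂ) * (I / (b : ℂ)) = I := by field_simp
  rw [gfun, harg]
  exact mul_ne_zero (Ssinc_ne_zero (by simp)) (Ssinc_ne_zero (by simp))

lemma gfun_growth (b : ℝ) (hb : 0 < b) :
    ∃ C : ℝ, ∀ z : ℂ, ‖gfun b z‖ ≤ C * Real.exp (2 * b * |z.im|) := by
  obtain ⟨C, hC1, hC⟩ := Ssinc_growth
  refine ⟨C * C, fun z => ?_⟩
  have him1 : ((b : ℂ) * z - (Real.pi : ℂ)).im = b * z.im := by simp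
  have him2 : ((b : ℂ) * z + (Real.pi : ℂ)).im = b * z.im := by simp
  rw [gfun, norm_mul]
  have h1 := hC ((b : ℂ) * z - (Real.pi : ℂ))
  have h2 := hC ((b : ℂ) * z + (Real.pi : ℂ))
  rw [him1] at h1; rw [him2] at h2
  have habs : |b * z.im| = b * |z.im| := by rw [abs_mul, abs_of_pos hb]
  rw [habs] at h1 h2
  calc ‖Ssinc ((b:ℂ)*z - (Real.pi:ℂ))‖ * ‖Ssinc ((b:ℂ)*z + (Real.pi:ℂ))‖
      ≤ (C * Real.exp (b * |z.im|)) * (C * Real.exp (b * |z.im|)) :=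
        mul_le_mul h1 h2 (norm_nonneg _) (by positivity)
    _ = C * C * (Real.exp (b * |z.im|) * Real.exp (b * |z.im|)) := by ring
    _ = C * C * Real.exp (2 * b * |z.im|) := by rw [← Real.exp_add]; ring_nf

lemma gfun_real_le_one (b : ℝ) (t : ℝ) : ‖gfun b (t : ℂ)‖ ≤ 1 := by
  rw [gfun, norm_mul]
  have e1 : (b : ℂ) * (t : ℂ) - (Real.pi : ℂ) = ((b * t - Real.pi : ℝ) : ℂ) := by push_cast; ring
  have e2 : (b : ℂ) * (t : ℂ) + (Real.pi : ℂ) = ((b * t + Real.pi : ℝ) : ℂ) := by push_cast; ring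
  rw [e1, e2]
  exact mul_le_one₀ (norm_Ssinc_real_le_one _) (norm_nonneg _) (norm_Ssinc_real_le_one _)

lemma gfun_decay (b : ℝ) (hb : 0 < b) :
    ∃ K : ℝ, 0 < K ∧ ∀ t : ℝ, ‖gfun b (t : ℂ)‖ ≤ K * (1 + t ^ 2)⁻¹ := by
  have hπ := Real.pi_pos
  have hP : (0:ℝ) < Real.pi ^ 2 := by positivity
  have hB : (0:ℝ) < b ^ 2 := by positivity
  refine ⟨1 + (2 * Real.pi / b) ^ 2 + 1 / Real.pi ^ 2 + 4 / b ^ 2, by positivity, fun t => ?_⟩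
  set K := 1 + (2 * Real.pi / b) ^ 2 + 1 / Real.pi ^ 2 + 4 / b ^ 2 with hK
  have hKge : 1 / Real.pi ^ 2 + 4 / b ^ 2 ≤ K := by
    rw [hK]; have : (0:ℝ) ≤ (2 * Real.pi / b) ^ 2 := sq_nonneg _; linarith
  have ht2 : (0:ℝ) < 1 + t ^ 2 := by positivity
  by_cases hcase : |t| ≤ 2 * Real.pi / b
  · have h1 : ‖gfun b (t : ℂ)‖ ≤ 1 := gfun_real_le_one b t
    have hsum : 1 + t ^ 2 ≤ K := by
      have ht : t ^ 2 ≤ (2 * Real.pi / b) ^ 2 := by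
        rw [← _root_.sq_abs t]; exact pow_le_pow_left₀ (abs_nonneg _) hcase 2
      have h2 : (0:ℝ) < 1 / Real.pi ^ 2 := by positivity
      have h3 : (0:ℝ) < 4 / b ^ 2 := by positivity
      rw [hK]; linarith
    rw [← div_eq_mul_inv, le_div_iff₀ ht2]
    nlinarith [norm_nonneg (gfun b (t : ℂ))]
  · push_neg at hcase
    have htpos : 0 < |t| := lt_trans (by positivity) hcase
    have hbt : 2 * Real.pi < b * |t| := by
      rw [div_lt_iff₀ hb] at hcase; nlinarith
    have habs_bt0 : |b * t| = b * |t| := by rw [abs_mul, abs_of_pos hb]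
    have harg1 : b * t - Real.pi ≠ 0 := by
      intro h
      have : |b * t| = Real.pi := by rw [sub_eq_zero] at h; rw [h, abs_of_pos hπ]
      rw [habs_bt0] at this; linarith
    have harg2 : b * t + Real.pi ≠ 0 := by
      intro h
      have : |b * t| = Real.pi := by
        have : b * t = -Real.pi := by linarith
        rw [this, abs_neg, abs_of_pos hπ]
      rw [habs_bt0] at this; linarith
    have habs_bt : |b * t| = b * |t| := by rw [abs_mul, abs_of_pos hb]
    have hlb1 : b * |t| / 2 ≤ |b * t - Real.pi| := by
      have h1 : |b * t| - |Real.pi| ≤ |b * t - Real.pi| := abs_sub_abs_le_abs_sub _ _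
      rw [habs_bt, abs_of_pos hπ] at h1; linarith
    have hlb2 : b * |t| / 2 ≤ |b * t + Real.pi| := by
      have h1 : |b * t| - |-Real.pi| ≤ |b * t - -Real.pi| := abs_sub_abs_le_abs_sub _ _
      rw [habs_bt, abs_neg, abs_of_pos hπ, sub_neg_eq_add] at h1; linarith
    have hbtpos : 0 < b * |t| := by positivity
    have e1 : (b : ℂ) * (t : ℂ) - (Real.pi : ℂ) = ((b * t - Real.pi : ℝ) : ℂ) := by push_cast; ring
    have e2 : (b : ℂ) * (t : ℂ) + (Real.pi : ℂ) = ((b * t + Real.pi : ℝ) : ℂ) := by push_cast; ring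
    have hmain : ‖gfun b (t : ℂ)‖ ≤ 4 / (b ^ 2 * t ^ 2) := by
      rw [gfun, norm_mul, e1, e2]
      have i1 : ‖Ssinc ((b * t - Real.pi : ℝ) : ℂ)‖ ≤ 2 / (b * |t|) := by
        refine (norm_Ssinc_real_le_inv _ harg1).trans ?_
        rw [div_le_div_iff₀ (abs_pos.mpr harg1) hbtpos]; nlinarith
      have i2 : ‖Ssinc ((b * t + Real.pi : ℝ) : ℂ)‖ ≤ 2 / (b * |t|) := by
        refine (norm_Ssinc_real_le_inv _ harg2).trans ?_
        rw [div_le_div_iff₀ (abs_pos.mpr harg2) hbtpos]; nlinarith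
      calc ‖Ssinc ((b * t - Real.pi : ℝ) : ℂ)‖ * ‖Ssinc ((b * t + Real.pi : ℝ) : ℂ)‖
          ≤ (2 / (b * |t|)) * (2 / (b * |t|)) :=
            mul_le_mul i1 i2 (norm_nonneg _) (by positivity)
        _ = 4 / (b ^ 2 * t ^ 2) := by
            rw [div_mul_div_comm]
            congr 1
            · norm_num
            · rw [mul_mul_mul_comm, ← sq, ← sq, _root_.sq_abs]
    refine hmain.trans ?_
    have ht2pos : (0:ℝ) < t ^ 2 := by nlinarith [mul_pos htpos htpos, _root_.sq_abs t]
    have hBT : (0:ℝ) < b ^ 2 * t ^ 2 := mul_pos hB ht2pos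
    have hsq : (b * |t|) ^ 2 = b ^ 2 * t ^ 2 := by rw [mul_pow, _root_.sq_abs]
    have hq : 4 * Real.pi ^ 2 ≤ b ^ 2 * t ^ 2 := by
      nlinarith [sq_nonneg (b * |t| - 2 * Real.pi)]
    rw [← div_eq_mul_inv, div_le_div_iff₀ hBT ht2]
    have f1 : (4:ℝ) ≤ (1 / Real.pi ^ 2) * (b ^ 2 * t ^ 2) := by
      have : (1 / Real.pi ^ 2) * (4 * Real.pi ^ 2) ≤ (1 / Real.pi ^ 2) * (b ^ 2 * t ^ 2) := by
        apply mul_le_mul_of_nonneg_left hq (by positivity)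
      have e : (1 / Real.pi ^ 2) * (4 * Real.pi ^ 2) = 4 := by field_simp
      linarith
    have f2 : (4 / b ^ 2) * (b ^ 2 * t ^ 2) = 4 * t ^ 2 := by field_simp
    have f3 : (1 / Real.pi ^ 2 + 4 / b ^ 2) * (b ^ 2 * t ^ 2) ≤ K * (b ^ 2 * t ^ 2) :=
      mul_le_mul_of_nonneg_right hKge (le_of_lt hBT)
    have f4 : (1 / Real.pi ^ 2 + 4 / b ^ 2) * (b ^ 2 * t ^ 2)
        = (1 / Real.pi ^ 2) * (b ^ 2 * t ^ 2) + (4 / b ^ 2) * (b ^ 2 * t ^ 2) := by ring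
    clear_value K
    linarith
lemma diff_deriv_iter (g : ℂ → ℂ) (hg : Differentiable ℂ g) (m : ℕ) :
    Differentiable ℂ (deriv^[m] g) := by
  induction m with
  | zero => exact hg
  | succ n ih =>
    rw [Function.iterate_succ_apply']
    have h : AnalyticOnNhd ℂ (deriv^[n] g) Set.univ := fun z _ => ih.analyticAt z
    intro z
    exact ((h.deriv) z trivial).differentiableAt

lemma hasFDerivAt_prod (g1 g2 : ℂ → ℂ) (h1 : Differentiable ℂ g1) (h2 : Differentiable ℂ g2)
    (z : Fin 2 → ℂ) :
    HasFDerivAt (fun z : Fin 2 → ℂ => g1 (z 0) * g2 (z 1))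
      (g1 (z 0) • (deriv g2 (z 1) • (ContinuousLinearMap.proj 1 : (Fin 2 → ℂ) →L[ℂ] ℂ))
        + g2 (z 1) • (deriv g1 (z 0) • (ContinuousLinearMap.proj 0 : (Fin 2 → ℂ) →L[ℂ] ℂ))) z := by
  have hA : HasFDerivAt (fun z : Fin 2 → ℂ => g1 (z 0))
      (deriv g1 (z 0) • (ContinuousLinearMap.proj 0 : (Fin 2 → ℂ) →L[ℂ] ℂ)) z :=
    (h1 (z 0)).hasDerivAt.comp_hasFDerivAt z
      ((ContinuousLinearMap.proj (R := ℂ) (φ := fun _ : Fin 2 => ℂ) 0).hasFDerivAt)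
  have hB : HasFDerivAt (fun z : Fin 2 → ℂ => g2 (z 1))
      (deriv g2 (z 1) • (ContinuousLinearMap.proj 1 : (Fin 2 → ℂ) →L[ℂ] ℂ)) z :=
    (h2 (z 1)).hasDerivAt.comp_hasFDerivAt z
      ((ContinuousLinearMap.proj (R := ℂ) (φ := fun _ : Fin 2 => ℂ) 1).hasFDerivAt)
  exact hA.mul hB

lemma pderivC_prod_left (g1 g2 : ℂ → ℂ) (h1 : Differentiable ℂ g1) (h2 : Differentiable ℂ g2) :
    pderivC 0 (fun z : Fin 2 → ℂ => g1 (z 0) * g2 (z 1)) =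
      fun z => deriv g1 (z 0) * g2 (z 1) := by
  funext z
  rw [pderivC, (hasFDerivAt_prod g1 g2 h1 h2 z).fderiv]
  simp [Pi.single_eq_same, Pi.single_eq_of_ne]
  ring

lemma pderivC_prod_right (g1 g2 : ℂ → ℂ) (h1 : Differentiable ℂ g1) (h2 : Differentiable ℂ g2) :
    pderivC 1 (fun z : Fin 2 → ℂ => g1 (z 0) * g2 (z 1)) =
      fun z => g1 (z 0) * deriv g2 (z 1) := by
  funext z
  rw [pderivC, (hasFDerivAt_prod g1 g2 h1 h2 z).fderiv]
  simp [Pi.single_eq_same, Pi.single_eq_of_ne]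

lemma pderivC_iter_left (g1 g2 : ℂ → ℂ) (h1 : Differentiable ℂ g1) (h2 : Differentiable ℂ g2)
    (m : ℕ) :
    (pderivC 0)^[m] (fun z : Fin 2 → ℂ => g1 (z 0) * g2 (z 1)) =
      fun z => (deriv^[m] g1) (z 0) * g2 (z 1) := by
  induction m with
  | zero => rfl
  | succ n ih =>
    rw [Function.iterate_succ_apply', ih,
      pderivC_prod_left _ _ (diff_deriv_iter g1 h1 n) h2, Function.iterate_succ_apply' deriv n g1]

lemma pderivC_iter_right (g1 g2 : ℂ → ℂ) (h1 : Differentiable ℂ g1) (h2 : Differentiable ℂ g2)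
    (m : ℕ) :
    (pderivC 1)^[m] (fun z : Fin 2 → ℂ => g1 (z 0) * g2 (z 1)) =
      fun z => g1 (z 0) * (deriv^[m] g2) (z 1) := by
  induction m with
  | zero => rfl
  | succ n ih =>
    rw [Function.iterate_succ_apply', ih,
      pderivC_prod_right _ _ h1 (diff_deriv_iter g2 h2 n), Function.iterate_succ_apply' deriv n g2]
lemma memLp_prod_aux (g1 g2 : ℝ → ℂ) (c1 : Continuous g1) (c2 : Continuous g2)
    (K1 K2 : ℝ) (hK1 : 0 < K1) (hK2 : 0 < K2)
    (hb1 : ∀ t, ‖g1 t‖ ≤ K1 * (1 + t ^ 2)⁻¹) (hb2 : ∀ t, ‖g2 t‖ ≤ K2 * (1 + t ^ 2)⁻¹)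
    (h1one : ∀ t, ‖g1 t‖ ≤ 1) (h2one : ∀ t, ‖g2 t‖ ≤ 1)
    (q : ENNReal) (hq : 1 ≤ q) :
    MemLp (fun x : Fin 2 → ℝ => g1 (x 0) * g2 (x 1)) q volume := by
  have contF : Continuous (fun x : Fin 2 → ℝ => g1 (x 0) * g2 (x 1)) :=
    (c1.comp (continuous_apply 0)).mul (c2.comp (continuous_apply 1))
  have aesm : AEStronglyMeasurable (fun x : Fin 2 → ℝ => g1 (x 0) * g2 (x 1))
      (volume : Measure (Fin 2 → ℝ)) := contF.aestronglyMeasurable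
  by_cases hqtop : q = ⊤
  · rw [hqtop]
    refine memLp_top_of_bound aesm 1 (Filter.Eventually.of_forall fun x => ?_)
    rw [norm_mul]
    exact mul_le_one₀ (h1one _) (norm_nonneg _) (h2one _)
  · have hq0 : q ≠ 0 := by
      intro h; rw [h] at hq; exact absurd hq (by simp)
    set p := q.toReal with hp
    have hp1 : 1 ≤ p := by
      rw [hp, ← ENNReal.toReal_one]
      exact (ENNReal.toReal_le_toReal ENNReal.one_ne_top hqtop).mpr hq
    have hppos : 0 < p := lt_of_lt_of_le zero_lt_one hp1
    -- integrability of each factor's p-th power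
    have factor : ∀ (g : ℝ → ℂ) (K : ℝ), 0 < K → Continuous g →
        (∀ t, ‖g t‖ ≤ K * (1 + t ^ 2)⁻¹) →
        Integrable (fun t : ℝ => ‖g t‖ ^ p) volume := by
      intro g K hK cg hbg
      have meas : AEStronglyMeasurable (fun t : ℝ => ‖g t‖ ^ p) volume :=
        ((cg.norm).rpow_const (fun t => Or.inr (le_of_lt hppos))).aestronglyMeasurable
      refine Integrable.mono' ((integrable_inv_one_add_sq).const_mul (K ^ p)) meas
        (Filter.Eventually.of_forall fun t => ?_)
      have ht2 : (0:ℝ) < 1 + t ^ 2 := by positivity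
      have hinv1 : (1 + t ^ 2)⁻¹ ≤ 1 := by
        rw [inv_le_one_iff₀]; right; nlinarith
      have step1 : ‖g t‖ ^ p ≤ (K * (1 + t ^ 2)⁻¹) ^ p :=
        Real.rpow_le_rpow (norm_nonneg _) (hbg t) (le_of_lt hppos)
      have step2 : (K * (1 + t ^ 2)⁻¹) ^ p = K ^ p * ((1 + t ^ 2)⁻¹) ^ p :=
        Real.mul_rpow (le_of_lt hK) (by positivity)
      have step3 : ((1 + t ^ 2)⁻¹) ^ p ≤ (1 + t ^ 2)⁻¹ := by
        have := Real.rpow_le_rpow_of_exponent_ge (by positivity) hinv1 hp1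
        rwa [Real.rpow_one] at this
      have : ‖g t‖ ^ p ≤ K ^ p * (1 + t ^ 2)⁻¹ := by
        rw [step2] at step1
        refine step1.trans ?_
        exact mul_le_mul_of_nonneg_left step3 (by positivity)
      rwa [Real.norm_of_nonneg (Real.rpow_nonneg (norm_nonneg _) p)]
    have int1 := factor g1 K1 hK1 c1 hb1
    have int2 := factor g2 K2 hK2 c2 hb2
    have intprod : Integrable
        (fun pt : ℝ × ℝ => (‖g1 pt.1‖ ^ p) * (‖g2 pt.2‖ ^ p)) (volume : Measure (ℝ × ℝ)) := by
      rw [MeasureTheory.Measure.volume_eq_prod]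
      exact int1.mul_prod int2
    have intpi : Integrable
        (fun x : Fin 2 → ℝ => (‖g1 (x 0)‖ ^ p) * (‖g2 (x 1)‖ ^ p))
        (volume : Measure (Fin 2 → ℝ)) := by
      have := ((MeasureTheory.volume_preserving_finTwoArrow ℝ).integrable_comp_emb
        (MeasurableEquiv.finTwoArrow).measurableEmbedding).mpr intprod
      convert this using 1
      funext x; rfl
    have intnorm : Integrable
        (fun x : Fin 2 → ℝ => ‖g1 (x 0) * g2 (x 1)‖ ^ p) (volume : Measure (Fin 2 → ℝ)) := by
      convert intpi using 1
      funext x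
      rw [norm_mul, Real.mul_rpow (norm_nonneg _) (norm_nonneg _)]
    have hmem1 : MemLp (fun x : Fin 2 → ℝ => ‖g1 (x 0) * g2 (x 1)‖ ^ q.toReal) (q / q) volume := by
      rw [ENNReal.div_self hq0 hqtop]
      exact (memLp_one_iff_integrable).mpr intnorm
    exact (memLp_norm_rpow_iff aesm hq0 hqtop).mp hmem1
/-- There is a nonzero entire function on `ℂ²` of exponential type `σ`, lying in
`L^p(ℝ²)` for every `1 ≤ p ≤ ∞`, which vanishes together with all of its pure
(non-mixed) partial derivatives at every sample point `2πu/σ`, `u ∈ ℤ²`. -/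
theorem pure_derivative_sampling_fails (σ : Fin 2 → ℝ) (hσ : ∀ j, 0 < σ j) :
    ∃ f : (Fin 2 → ℂ) → ℂ,
      Differentiable ℂ f ∧
      (∃ C, ∀ z, ‖f z‖ ≤ C * Real.exp (∑ j, σ j * |(z j).im|)) ∧
      f ≠ 0 ∧
      (∀ q : ENNReal, 1 ≤ q →
        MemLp (fun x : Fin 2 → ℝ => f (fun j => (x j : ℂ))) q volume) ∧
      (∀ u : Fin 2 → ℤ, f (samplePt σ u) = 0) ∧
      (∀ u : Fin 2 → ℤ, ∀ j : Fin 2, ∀ m : ℕ, 1 ≤ m →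
        ((pderivC j)^[m] f) (samplePt σ u) = 0) := by
  set b0 : ℝ := σ 0 / 2 with hb0
  set b1 : ℝ := σ 1 / 2 with hb1
  have hσ0 : 0 < σ 0 := hσ 0
  have hσ1 : 0 < σ 1 := hσ 1
  have hb0pos : 0 < b0 := by rw [hb0]; positivity
  have hb1pos : 0 < b1 := by rw [hb1]; positivity
  refine ⟨fun z : Fin 2 → ℂ => gfun b0 (z 0) * gfun b1 (z 1), ?_, ?_, ?_, ?_, ?_, ?_⟩
  · -- differentiable
    have d0 : Differentiable ℂ (fun z : Fin 2 → ℂ => z 0) :=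
      (ContinuousLinearMap.proj (R := ℂ) (φ := fun _ : Fin 2 => ℂ) 0).differentiable
    have d1 : Differentiable ℂ (fun z : Fin 2 → ℂ => z 1) :=
      (ContinuousLinearMap.proj (R := ℂ) (φ := fun _ : Fin 2 => ℂ) 1).differentiable
    exact ((gfun_diff b0).comp d0).mul ((gfun_diff b1).comp d1)
  · -- exponential growth
    obtain ⟨C0, hC0⟩ := gfun_growth b0 hb0pos
    obtain ⟨C1, hC1⟩ := gfun_growth b1 hb1pos
    refine ⟨C0 * C1, fun z => ?_⟩
    have h0 := hC0 (z 0)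
    have h1 := hC1 (z 1)
    have e0 : 2 * b0 = σ 0 := by rw [hb0]; ring
    have e1 : 2 * b1 = σ 1 := by rw [hb1]; ring
    rw [e0] at h0; rw [e1] at h1
    rw [norm_mul, Fin.sum_univ_two]
    calc ‖gfun b0 (z 0)‖ * ‖gfun b1 (z 1)‖
        ≤ (C0 * Real.exp (σ 0 * |(z 0).im|)) * (C1 * Real.exp (σ 1 * |(z 1).im|)) :=
          mul_le_mul h0 h1 (norm_nonneg _) ((norm_nonneg _).trans h0)
      _ = C0 * C1 * Real.exp (σ 0 * |(z 0).im| + σ 1 * |(z 1).im|) := by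
          rw [Real.exp_add]; ring
  · -- nonzero
    intro h
    have hz := congrFun h (fun j : Fin 2 => I / ((if j = 0 then b0 else b1 : ℝ) : ℂ))
    simp only [Pi.zero_apply] at hz
    have hz' : gfun b0 (I / (b0 : ℂ)) * gfun b1 (I / (b1 : ℂ)) = 0 := by
      simpa using hz
    exact (mul_ne_zero (gfun_ne_zero b0 (ne_of_gt hb0pos))
      (gfun_ne_zero b1 (ne_of_gt hb1pos))) hz'
  · -- Memℒp
    intro q hq
    obtain ⟨K0, hK0pos, hK0⟩ := gfun_decay b0 hb0pos
    obtain ⟨K1, hK1pos, hK1⟩ := gfun_decay b1 hb1pos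
    exact memLp_prod_aux (fun t : ℝ => gfun b0 (t : ℂ)) (fun t : ℝ => gfun b1 (t : ℂ))
      ((gfun_diff b0).continuous.comp Complex.continuous_ofReal)
      ((gfun_diff b1).continuous.comp Complex.continuous_ofReal)
      K0 K1 hK0pos hK1pos hK0 hK1 (gfun_real_le_one b0) (gfun_real_le_one b1) q hq
  · -- vanishing at sample points
    intro u
    have h0 : samplePt σ u 0 = ((2 * Real.pi * (u 0 : ℝ) / σ 0 : ℝ) : ℂ) := rfl
    have harith : b0 * (2 * Real.pi * (u 0 : ℝ) / σ 0) = Real.pi * (u 0 : ℤ) := by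
      rw [hb0]; field_simp
    show gfun b0 (samplePt σ u 0) * gfun b1 (samplePt σ u 1) = 0
    rw [h0, gfun_zero_of b0 _ (u 0) harith, zero_mul]
  · -- iterated pure derivatives vanish
    intro u j m _
    have h0 : samplePt σ u 0 = ((2 * Real.pi * (u 0 : ℝ) / σ 0 : ℝ) : ℂ) := rfl
    have h1 : samplePt σ u 1 = ((2 * Real.pi * (u 1 : ℝ) / σ 1 : ℝ) : ℂ) := rfl
    have harith0 : b0 * (2 * Real.pi * (u 0 : ℝ) / σ 0) = Real.pi * (u 0 : ℤ) := by
      rw [hb0]; field_simp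
    have harith1 : b1 * (2 * Real.pi * (u 1 : ℝ) / σ 1) = Real.pi * (u 1 : ℤ) := by
      rw [hb1]; field_simp
    fin_cases j
    · show ((pderivC (0 : Fin 2))^[m] (fun z => gfun b0 (z 0) * gfun b1 (z 1))) (samplePt σ u) = 0
      rw [pderivC_iter_left _ _ (gfun_diff b0) (gfun_diff b1) m]
      show (deriv^[m] (gfun b0)) (samplePt σ u 0) * gfun b1 (samplePt σ u 1) = 0
      rw [h1, gfun_zero_of b1 _ (u 1) harith1, mul_zero]
    · show ((pderivC (1 : Fin 2))^[m] (fun z => gfun b0 (z 0) * gfun b1 (z 1))) (samplePt σ u) = 0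
      rw [pderivC_iter_right _ _ (gfun_diff b0) (gfun_diff b1) m]
      show gfun b0 (samplePt σ u 0) * (deriv^[m] (gfun b1)) (samplePt σ u 1) = 0
      rw [h0, gfun_zero_of b0 _ (u 0) harith0, zero_mul]
end

section
/- Let f : ℂ → ℂ be an entire function of exponential type π (i.e. |f(z)| ≤ C·e^{π|Im z|} for some constant C) such that f(x) → 0 as x → ±∞ along ℝ. If f(2k) = 0 and f′(2k) = 0 for every k ∈ ℤ, then f is identically zero. -/
open Complex Real Filter Set Metric Topology

noncomputable def sfun (z : ℂ) : ℂ := Complex.sin ((Real.pi : ℂ) / 2 * z)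

lemma sfun_diff : Differentiable ℂ sfun :=
  Complex.differentiable_sin.comp (differentiable_id.const_mul _)

lemma complex_sin_re (z : ℂ) : (Complex.sin z).re = Real.sin z.re * Real.cosh z.im := by
  rw [Complex.sin_eq]
  simp [← Complex.ofReal_sin, ← Complex.ofReal_cos, ← Complex.ofReal_sinh, ← Complex.ofReal_cosh]

lemma complex_sin_im (z : ℂ) : (Complex.sin z).im = Real.cos z.re * Real.sinh z.im := by
  rw [Complex.sin_eq]
  simp [← Complex.ofReal_sin, ← Complex.ofReal_cos, ← Complex.ofReal_sinh, ← Complex.ofReal_cosh]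

lemma norm_sin_sq (z : ℂ) : ‖Complex.sin z‖ ^ 2
    = Real.sin z.re ^ 2 * Real.cosh z.im ^ 2 + Real.cos z.re ^ 2 * Real.sinh z.im ^ 2 := by
  rw [Complex.sq_norm, Complex.normSq_apply, complex_sin_re, complex_sin_im]
  ring

lemma sinh_le_norm_sin (z : ℂ) : |Real.sinh z.im| ≤ ‖Complex.sin z‖ := by
  have h := norm_sin_sq z
  have h0 : (0:ℝ) ≤ ‖Complex.sin z‖ := norm_nonneg _
  nlinarith [Real.sin_sq_add_cos_sq z.re, Real.cosh_sq z.im, _root_.sq_abs (Real.sinh z.im),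
    abs_nonneg (Real.sinh z.im), sq_nonneg (Real.sin z.re * Real.sinh z.im),
    sq_nonneg (Real.cos z.re)]

lemma sfun_eq_zero_iff (z : ℂ) : sfun z = 0 ↔ ∃ k : ℤ, z = 2 * k := by
  have hπ : (Real.pi : ℂ) ≠ 0 := by exact_mod_cast Real.pi_ne_zero
  rw [sfun, Complex.sin_eq_zero_iff]
  constructor
  · rintro ⟨k, hk⟩
    refine ⟨k, mul_left_cancel₀ hπ ?_⟩
    linear_combination 2 * hk
  · rintro ⟨k, rfl⟩
    exact ⟨k, by ring⟩

lemma sfun_arg_re (z : ℂ) : ((Real.pi : ℂ) / 2 * z).re = Real.pi / 2 * z.re := by simp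
lemma sfun_arg_im (z : ℂ) : ((Real.pi : ℂ) / 2 * z).im = Real.pi / 2 * z.im := by simp

lemma c0_pos : (0:ℝ) < (1 - Real.exp (-Real.pi)) / 2 := by
  have : Real.exp (-Real.pi) < 1 := by
    rw [Real.exp_lt_one_iff]
    linarith [Real.pi_pos]
  linarith

lemma sfun_lower_strip (z : ℂ) (h : 1 ≤ |z.im|) :
    (1 - Real.exp (-Real.pi)) / 2 * Real.exp (Real.pi / 2 * |z.im|) ≤ ‖sfun z‖ := by
  have h1 : |Real.sinh (Real.pi / 2 * z.im)| ≤ ‖sfun z‖ := by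
    have h := sinh_le_norm_sin ((Real.pi : ℂ) / 2 * z); rw [sfun_arg_im] at h; exact h
  have habs : |Real.sinh (Real.pi / 2 * z.im)| = Real.sinh (Real.pi / 2 * |z.im|) := by
    rw [Real.abs_sinh, abs_mul, abs_of_pos (by positivity : (0:ℝ) < Real.pi / 2)]
  rw [habs] at h1
  refine le_trans ?_ h1
  rw [Real.sinh_eq]
  set t := Real.pi / 2 * |z.im| with ht
  have htp : Real.pi / 2 ≤ t := by
    rw [ht]; nlinarith [Real.pi_pos]
  have hkey : Real.exp (-t) ≤ Real.exp (-Real.pi) * Real.exp t := by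
    rw [← Real.exp_add]
    apply Real.exp_le_exp.2
    linarith
  nlinarith [Real.exp_pos t]

lemma sfun_vertical (z : ℂ) (m : ℤ) (hre : z.re = 2 * m + 1) :
    ‖sfun z‖ = Real.cosh (Real.pi / 2 * z.im) := by
  have h := norm_sin_sq ((Real.pi : ℂ) / 2 * z)
  rw [sfun_arg_re, sfun_arg_im, hre] at h
  have harg : Real.pi / 2 * (2 * (m:ℝ) + 1) = Real.pi / 2 + m * Real.pi := by ring
  have hsin : Real.sin (Real.pi / 2 * (2 * (m:ℝ) + 1)) ^ 2 = 1 := by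
    rw [harg, Real.sin_add_int_mul_pi, Real.sin_pi_div_two]
    rw [mul_one, ← zpow_natCast (((-1:ℝ)) ^ m) 2, ← zpow_mul]
    rw [mul_comm, zpow_mul]
    norm_num
  have hcos : Real.cos (Real.pi / 2 * (2 * (m:ℝ) + 1)) = 0 := by
    rw [harg, Real.cos_add_int_mul_pi, Real.cos_pi_div_two, mul_zero]
  rw [hsin, hcos] at h
  have h2 : ‖sfun z‖ ^ 2 = Real.cosh (Real.pi / 2 * z.im) ^ 2 := by
    rw [show sfun z = Complex.sin ((Real.pi : ℂ) / 2 * z) from rfl, h]; ring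
  have := Real.cosh_pos (x := Real.pi / 2 * z.im)
  nlinarith [norm_nonneg (sfun z)]

lemma sfun_vertical_lower (z : ℂ) (m : ℤ) (hre : z.re = 2 * m + 1) :
    (1 - Real.exp (-Real.pi)) / 2 * Real.exp (Real.pi / 2 * |z.im|) ≤ ‖sfun z‖ := by
  rw [sfun_vertical z m hre, ← Real.cosh_abs, abs_mul,
    abs_of_pos (by positivity : (0:ℝ) < Real.pi / 2), Real.cosh_eq]
  have h1 : Real.exp (-Real.pi) > 0 := Real.exp_pos _
  have h2 : Real.exp (-(Real.pi / 2 * |z.im|)) > 0 := Real.exp_pos _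
  nlinarith [Real.exp_pos (Real.pi / 2 * |z.im|)]

lemma sfun_hasDerivAt (z : ℂ) :
    HasDerivAt sfun ((Real.pi : ℂ) / 2 * Complex.cos ((Real.pi : ℂ) / 2 * z)) z := by
  have h1 : HasDerivAt (fun w : ℂ => (Real.pi : ℂ) / 2 * w) ((Real.pi : ℂ) / 2) z := by
    simpa using (hasDerivAt_id z).const_mul ((Real.pi : ℂ) / 2)
  exact ((Complex.hasDerivAt_sin ((Real.pi : ℂ) / 2 * z)).comp z h1).congr_deriv (mul_comm _ _)

lemma sfun_deriv_ne (k : ℤ) : deriv sfun (2 * (k : ℂ)) ≠ 0 := by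
  rw [(sfun_hasDerivAt _).deriv]
  have harg : (Real.pi : ℂ) / 2 * (2 * (k : ℂ)) = (((k : ℝ) * Real.pi : ℝ) : ℂ) := by
    push_cast; ring
  rw [harg, ← Complex.ofReal_cos]
  have h1 : Real.cos ((k : ℝ) * Real.pi) ≠ 0 := by
    have := Real.abs_cos_int_mul_pi k
    intro h; rw [h] at this; simp at this
  have h2 : ((Real.pi : ℂ)) ≠ 0 := by exact_mod_cast Real.pi_ne_zero
  simp only [ne_eq, mul_eq_zero, div_eq_zero_iff]
  push_neg
  exact ⟨⟨h2, by norm_num⟩, by exact_mod_cast h1⟩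

lemma sfun_ne_of_near (k : ℤ) (w : ℂ) (hw : w ∈ Metric.ball (2 * (k:ℂ)) 1) (hne : w ≠ 2 * (k:ℂ)) :
    sfun w ≠ 0 := by
  intro h0
  obtain ⟨k', rfl⟩ := (sfun_eq_zero_iff w).1 h0
  have hkk : k' ≠ k := by rintro rfl; exact hne rfl
  have hcast : (2 * (k':ℂ) - 2 * (k:ℂ)) = (((2 * (k' - k) : ℤ) : ℝ) : ℂ) := by push_cast; ring
  have hdist : dist (2 * (k':ℂ)) (2 * (k:ℂ)) = |((2 * (k' - k) : ℤ) : ℝ)| := by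
    rw [Complex.dist_eq, hcast, Complex.norm_real, Real.norm_eq_abs]
  rw [Metric.mem_ball, hdist] at hw
  have hint : (2 : ℤ) ≤ |2 * (k' - k)| := by
    have h1 : (1:ℤ) ≤ |k' - k| := Int.one_le_abs (sub_ne_zero.2 hkk)
    calc (2:ℤ) = 2 * 1 := by ring
    _ ≤ 2 * |k' - k| := by linarith
    _ = |2 * (k' - k)| := by rw [abs_mul]; norm_num
  have h2 : (2:ℝ) ≤ |((2 * (k' - k) : ℤ) : ℝ)| := by
    rw [← Int.cast_abs]
    exact_mod_cast hint
  linarith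

lemma G_diff_at_zero (f : ℂ → ℂ) (hf : Differentiable ℂ f) (k : ℤ)
    (hfa : f (2 * (k:ℂ)) = 0) (hf'a : deriv f (2 * (k:ℂ)) = 0) :
    DifferentiableAt ℂ (fun z => if sfun z = 0 then
      limUnder (𝓝[≠] z) (fun w => f w / sfun w ^ 2) else f z / sfun z ^ 2) (2 * (k:ℂ)) := by
  classical
  set a : ℂ := 2 * (k:ℂ) with ha
  have hsa : sfun a = 0 := (sfun_eq_zero_iff a).2 ⟨k, rfl⟩
  set g₀ : ℂ → ℂ := fun w => f w / sfun w ^ 2 with hg₀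
  set h₁ := dslope f a with hh₁
  set h₂ := dslope h₁ a with hh₂
  set S := dslope sfun a with hS
  obtain ⟨p, hp⟩ := hf.analyticAt a
  have hp1 := hp.has_fpower_series_dslope_fslope
  have hp2 := hp1.has_fpower_series_dslope_fslope
  have hana2 : AnalyticAt ℂ h₂ a := ⟨_, hp2⟩
  have hcont2 : ContinuousAt h₂ a := hana2.continuousAt
  have hScont : ContinuousAt S a := continuousAt_dslope_same.2 (sfun_diff a)
  have hSa : S a ≠ 0 := by rw [hS, dslope_same]; exact sfun_deriv_ne k
  set L := h₂ a / S a ^ 2 with hL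
  have heq : ∀ w : ℂ, w ≠ a → h₂ w / S w ^ 2 = g₀ w := by
    intro w hw
    have hwa : w - a ≠ 0 := sub_ne_zero.2 hw
    have h₁w : h₁ w = f w / (w - a) := by
      rw [hh₁, dslope_of_ne f hw, slope_def_field, hfa, sub_zero]
    have h₂w : h₂ w = f w / (w - a) ^ 2 := by
      rw [hh₂, dslope_of_ne h₁ hw, slope_def_field, h₁w, hh₁, dslope_same, hf'a, sub_zero,
        div_div, ← sq]
    have hSw : S w = sfun w / (w - a) := by
      rw [hS, dslope_of_ne sfun hw, slope_def_field, hsa, sub_zero]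
    rw [h₂w, hSw, hg₀]
    by_cases hsw : sfun w = 0
    · simp [hsw]
    · field_simp
  have htend : Tendsto g₀ (𝓝[≠] a) (𝓝 L) := by
    have h0 : ContinuousAt (fun w => h₂ w / S w ^ 2) a :=
      hcont2.div (hScont.pow 2) (pow_ne_zero 2 hSa)
    have h1 : Tendsto (fun w => h₂ w / S w ^ 2) (𝓝[≠] a) (𝓝 L) :=
      (h0.tendsto).mono_left nhdsWithin_le_nhds
    exact h1.congr' (eventually_nhdsWithin_of_forall fun w hw => heq w hw)
  have hb : (fun w => ‖g₀ w‖) ⁻¹' (Set.Iic (‖L‖ + 1)) ∈ 𝓝[≠] a :=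
    htend.norm (Iic_mem_nhds (by linarith))
  obtain ⟨r₁, hr₁, hball⟩ := Metric.mem_nhdsWithin_iff.1 hb
  set r := min r₁ 1 with hrdef
  have hr : 0 < r := lt_min hr₁ one_pos
  have hr1 : r ≤ 1 := min_le_right _ _
  have hzero : ∀ w ∈ Metric.ball a r, w ≠ a → sfun w ≠ 0 := fun w hw hne =>
    sfun_ne_of_near k w (Metric.ball_subset_ball hr1 hw) hne
  have hdOn : DifferentiableOn ℂ g₀ (Metric.ball a r \ {a}) := by
    intro w hw
    have hsw : sfun w ≠ 0 := hzero w hw.1 hw.2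
    exact ((hf w).div ((sfun_diff w).pow 2) (pow_ne_zero 2 hsw)).differentiableWithinAt
  have hbdd : BddAbove (norm ∘ g₀ '' (Metric.ball a r \ {a})) := by
    refine ⟨‖L‖ + 1, ?_⟩
    rintro x ⟨w, hw, rfl⟩
    exact hball ⟨Metric.ball_subset_ball (min_le_left _ _) hw.1, hw.2⟩
  have hupd := Complex.differentiableOn_update_limUnder_of_bddAbove
    (Metric.ball_mem_nhds a hr) hdOn hbdd
  have hda : DifferentiableAt ℂ (Function.update g₀ a (limUnder (𝓝[≠] a) g₀)) a :=
    (hupd a (Metric.mem_ball_self hr)).differentiableAt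
      (isOpen_ball.mem_nhds (Metric.mem_ball_self hr))
  refine hda.congr_of_eventuallyEq ?_
  filter_upwards [isOpen_ball.mem_nhds (Metric.mem_ball_self hr)] with w hw
  by_cases hwa : w = a
  · subst hwa; rw [Function.update_self]; simp only [hsa, if_pos rfl]; rfl
  · rw [Function.update_of_ne hwa]; exact if_neg (hzero w hw hwa)

/-- One-dimensional case of Proposition 2.3: an entire function of exponential type `π`
that tends to `0` along the real axis at `±∞` and vanishes to second order at every even
integer is identically zero. -/
theorem eq_zero_of_double_samples_vanish_dim_one
    (f : ℂ → ℂ) (hf : Differentiable ℂ f)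
    (C : ℝ) (hC : ∀ z : ℂ, ‖f z‖ ≤ C * Real.exp (Real.pi * |z.im|))
    (htop : Tendsto (fun x : ℝ => f (x : ℂ)) atTop (nhds 0))
    (hbot : Tendsto (fun x : ℝ => f (x : ℂ)) atBot (nhds 0))
    (hsamples : ∀ k : ℤ, f ((2 * k : ℤ) : ℂ) = 0 ∧ deriv f ((2 * k : ℤ) : ℂ) = 0) :
    f = 0 := by
  classical
  have hC0 : 0 ≤ C := le_trans (norm_nonneg (f 0)) (by simpa using hC 0)
  set c₀ : ℝ := (1 - Real.exp (-Real.pi)) / 2 with hc₀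
  have hc₀pos : 0 < c₀ := c0_pos
  set G : ℂ → ℂ := fun z => if sfun z = 0 then
      limUnder (𝓝[≠] z) (fun w => f w / sfun w ^ 2) else f z / sfun z ^ 2 with hG
  have hsample2 : ∀ k : ℤ, f (2 * (k:ℂ)) = 0 ∧ deriv f (2 * (k:ℂ)) = 0 := by
    intro k
    have h := hsamples k
    have hcast : ((2 * k : ℤ) : ℂ) = 2 * (k:ℂ) := by push_cast; ring
    rwa [hcast] at h
  have hG_diff : Differentiable ℂ G := by
    intro z₀
    by_cases h0 : sfun z₀ = 0
    · obtain ⟨k, rfl⟩ := (sfun_eq_zero_iff z₀).1 h0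
      exact G_diff_at_zero f hf k (hsample2 k).1 (hsample2 k).2
    · have hev : ∀ᶠ w in 𝓝 z₀, sfun w ≠ 0 :=
        (sfun_diff.continuous.continuousAt).eventually_ne h0
      have hd : DifferentiableAt ℂ (fun z => f z / sfun z ^ 2) z₀ :=
        (hf z₀).div ((sfun_diff z₀).pow 2) (pow_ne_zero 2 h0)
      refine hd.congr_of_eventuallyEq ?_
      filter_upwards [hev] with w hw
      exact if_neg hw
  have hGoff : ∀ z : ℂ, (1 ≤ |z.im| ∨ ∃ m : ℤ, z.re = 2 * m + 1) → ‖G z‖ ≤ C / c₀ ^ 2 := by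
    intro z hz
    have hlb : c₀ * Real.exp (Real.pi / 2 * |z.im|) ≤ ‖sfun z‖ := by
      rcases hz with h | ⟨m, hm⟩
      · exact sfun_lower_strip z h
      · exact sfun_vertical_lower z m hm
    have hspos : 0 < ‖sfun z‖ := lt_of_lt_of_le (by positivity) hlb
    have hsne : sfun z ≠ 0 := norm_pos_iff.1 hspos
    have hGz : G z = f z / sfun z ^ 2 := if_neg hsne
    rw [hGz, norm_div, norm_pow]
    have hexp : Real.exp (Real.pi / 2 * |z.im|) ^ 2 = Real.exp (Real.pi * |z.im|) := by
      rw [sq, ← Real.exp_add]; ring_nf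
    have hstep : ‖f z‖ / ‖sfun z‖ ^ 2
        ≤ (C * Real.exp (Real.pi * |z.im|)) / ((c₀ * Real.exp (Real.pi / 2 * |z.im|)) ^ 2) := by
      apply div_le_div₀ (by positivity) (hC z) (by positivity)
      exact pow_le_pow_left₀ (by positivity) hlb 2
    refine hstep.trans_eq ?_
    rw [mul_pow, hexp]
    have he : Real.exp (Real.pi * |z.im|) ≠ 0 := (Real.exp_pos _).ne'
    field_simp
  have hGall : ∀ z : ℂ, ‖G z‖ ≤ C / c₀ ^ 2 := by
    intro z
    by_cases him : 1 ≤ |z.im|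
    · exact hGoff z (Or.inl him)
    · push_neg at him
      set k := round (z.re / 2) with hk
      have hrk := abs_sub_round (z.re / 2)
      set U : Set ℂ := Set.Ioo (2*(k:ℝ) - 1) (2*(k:ℝ) + 1) ×ℂ Set.Ioo (-1 : ℝ) 1 with hU
      have hab : (2*(k:ℝ) - 1) < 2*(k:ℝ) + 1 := by linarith
      have hab2 : (-1:ℝ) < 1 := by norm_num
      have habs1 := abs_le.1 hrk
      have habs2 := abs_le.1 him.le
      have hzU : z ∈ closure U := by
        rw [hU, Complex.closure_reProdIm, closure_Ioo hab.ne, closure_Ioo hab2.ne]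
        rw [Complex.mem_reProdIm]
        constructor
        · constructor <;> [linarith [habs1.1]; linarith [habs1.2]]
        · exact ⟨habs2.1, habs2.2⟩
      refine Complex.norm_le_of_forall_mem_frontier_norm_le
        ((Metric.isBounded_Ioo _ _).reProdIm (Metric.isBounded_Ioo _ _))
        (hG_diff.diffContOnCl) ?_ hzU
      intro w hw
      rw [Complex.frontier_reProdIm, closure_Ioo hab.ne, closure_Ioo hab2.ne,
        frontier_Ioo hab, frontier_Ioo hab2] at hw
      rcases hw with hw | hw
      · rw [Complex.mem_reProdIm] at hw
        apply hGoff w (Or.inl ?_)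
        simp only [Set.mem_insert_iff, Set.mem_singleton_iff] at hw
        rcases hw.2 with h | h <;> rw [h] <;> norm_num
      · rw [Complex.mem_reProdIm] at hw
        apply hGoff w (Or.inr ?_)
        simp only [Set.mem_insert_iff, Set.mem_singleton_iff] at hw
        rcases hw.1 with h | h
        · exact ⟨k - 1, by push_cast; linarith [h]⟩
        · exact ⟨k, by push_cast; linarith [h]⟩
  have hbdd : Bornology.IsBounded (Set.range G) := by
    rw [isBounded_iff_forall_norm_le]
    exact ⟨C / c₀ ^ 2, by rintro x ⟨z, rfl⟩; exact hGall z⟩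
  have hconst : ∀ z : ℂ, G z = G 1 := fun z => hG_diff.apply_eq_apply_of_bounded hbdd z 1
  have hfactor : ∀ z : ℂ, sfun z ≠ 0 → f z = G 1 * sfun z ^ 2 := by
    intro z hs
    have h1 : G z = f z / sfun z ^ 2 := if_neg hs
    rw [← hconst z, h1]
    field_simp
  have hodd : ∀ n : ℕ, f (((2 * (n:ℝ) + 1 : ℝ)) : ℂ) = G 1 := by
    intro n
    have hs : sfun ((2*(n:ℝ)+1 : ℝ) : ℂ) = (((-1:ℝ)^n : ℝ) : ℂ) := by
      rw [sfun]
      have harg : (Real.pi : ℂ)/2 * ((2*(n:ℝ)+1 : ℝ):ℂ)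
          = ((Real.pi/2 + n*Real.pi : ℝ) : ℂ) := by push_cast; ring
      rw [harg, ← Complex.ofReal_sin, Real.sin_add_nat_mul_pi, Real.sin_pi_div_two, mul_one]
    have hsne : sfun ((2*(n:ℝ)+1 : ℝ) : ℂ) ≠ 0 := by
      rw [hs]
      simp
    have hfac := hfactor _ hsne
    rw [hfac, hs]
    have hsq : ((((-1:ℝ))^n : ℝ) : ℂ)^2 = 1 := by
      have h4 : ((-1:ℝ)^n)^2 = 1 := by
        rw [← pow_mul, mul_comm n 2, pow_mul]
        norm_num
      rw [show ((((-1:ℝ))^n : ℝ) : ℂ)^2 = (((((-1:ℝ))^n)^2 : ℝ) : ℂ) by push_cast; ring, h4,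
        Complex.ofReal_one]
    rw [hsq, mul_one]
  have htendn : Tendsto (fun n : ℕ => (2*(n:ℝ)+1 : ℝ)) atTop atTop := by
    apply Filter.tendsto_atTop_add_const_right
    exact (tendsto_natCast_atTop_atTop).const_mul_atTop (by norm_num)
  have h2 : Tendsto (fun n : ℕ => f (((2*(n:ℝ)+1 : ℝ)) : ℂ)) atTop (𝓝 0) := htop.comp htendn
  have hG1 : G 1 = 0 := by
    have h3 : Tendsto (fun _ : ℕ => G 1) atTop (𝓝 (0:ℂ)) := by
      refine h2.congr fun n => hodd n
    exact tendsto_nhds_unique tendsto_const_nhds h3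
  funext z
  simp only [Pi.zero_apply]
  by_cases hz : sfun z = 0
  · obtain ⟨m, rfl⟩ := (sfun_eq_zero_iff z).1 hz
    exact (hsample2 m).1
  · rw [hfactor z hz, hG1, zero_mul]
end

section
/- Let f : ℂ → ℂ be an entire function of exponential type π (i.e. |f(z)| ≤ C·e^{π|Im z|} for some constant C) that is bounded on ℝ. If f(2k) = 0 and f′(2k) = 0 for every k ∈ ℤ, then there is a constant c ∈ ℂ such that f(z) = c·sin²(πz/2) for all z ∈ ℂ. -/
open Complex Real Filter Set Bornology

private lemma dslope_entire {f : ℂ → ℂ} (hf : Differentiable ℂ f) (a : ℂ) :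
    Differentiable ℂ (dslope f a) := by
  intro z
  rcases eq_or_ne z a with rfl | h
  · obtain ⟨p, hp⟩ := hf.analyticAt z
    exact hp.has_fpower_series_dslope_fslope.analyticAt.differentiableAt
  · exact (differentiableAt_dslope_of_ne h).2 (hf z)

private lemma entire_div_of_zeros {f g : ℂ → ℂ} (hf : Differentiable ℂ f)
    (hg : Differentiable ℂ g) (h0 : ∀ a, g a = 0 → f a = 0)
    (hg' : ∀ a, g a = 0 → deriv g a ≠ 0) :
    Differentiable ℂ (fun z => if g z = 0 then deriv f z / deriv g z else f z / g z) ∧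
      ∀ z, f z = g z * (if g z = 0 then deriv f z / deriv g z else f z / g z) := by
  constructor
  · intro a
    rcases eq_or_ne (g a) 0 with ha | ha
    · have hda := dslope_entire hg a
      have hdf := dslope_entire hf a
      have hne : dslope g a a ≠ 0 := by rw [dslope_same]; exact hg' a ha
      have hev : ∀ᶠ z in nhds a, dslope g a z ≠ 0 :=
        (hda a).continuousAt.eventually_ne hne
      have heq : (fun z => dslope f a z / dslope g a z)
          =ᶠ[nhds a] fun z => if g z = 0 then deriv f z / deriv g z else f z / g z := by
        filter_upwards [hev] with z hz
        rcases eq_or_ne z a with rfl | hza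
        · simp [ha, dslope_same]
        · have hgz : g z = (z - a) * dslope g a z := by
            have h1 := sub_smul_dslope g a z
            rw [smul_eq_mul] at h1
            rw [h1, ha, sub_zero]
          have hfz : f z = (z - a) * dslope f a z := by
            have h1 := sub_smul_dslope f a z
            rw [smul_eq_mul] at h1
            rw [h1, h0 a ha, sub_zero]
          have hz0 : g z ≠ 0 := by
            rw [hgz]; exact mul_ne_zero (sub_ne_zero.2 hza) hz
          rw [if_neg hz0, hfz, hgz, mul_div_mul_left _ _ (sub_ne_zero.2 hza)]
      have hq : DifferentiableAt ℂ (fun z => dslope f a z / dslope g a z) a :=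
        (hdf a).div (hda a) hne
      exact heq.differentiableAt_iff.1 hq
    · have hev : ∀ᶠ z in nhds a, g z ≠ 0 := (hg a).continuousAt.eventually_ne ha
      have heq : (fun z => f z / g z)
          =ᶠ[nhds a] fun z => if g z = 0 then deriv f z / deriv g z else f z / g z := by
        filter_upwards [hev] with z hz
        rw [if_neg hz]
      exact heq.differentiableAt_iff.1 ((hf a).div (hg a) ha)
  · intro z
    rcases eq_or_ne (g z) 0 with hz | hz
    · rw [hz, h0 z hz, zero_mul]
    · rw [if_neg hz, mul_div_cancel₀ _ hz]

private lemma norm_sin_sq_complex (z : ℂ) :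
    ‖Complex.sin z‖ ^ 2 = Real.sin z.re ^ 2 + Real.sinh z.im ^ 2 := by
  rw [Complex.sin_eq, ← Complex.ofReal_sin, ← Complex.ofReal_cos, ← Complex.ofReal_cosh,
    ← Complex.ofReal_sinh, ← Complex.ofReal_mul, ← Complex.ofReal_mul]
  rw [Complex.sq_norm, Complex.normSq_add_mul_I]
  linear_combination Real.sin z.re ^ 2 * Real.cosh_sq z.im
    + Real.sinh z.im ^ 2 * Real.sin_sq_add_cos_sq z.re

private lemma sin_odd_sq (m : ℤ) : Real.sin (Real.pi * (2 * m + 1) / 2) ^ 2 = 1 := by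
  have h : Real.pi * (2 * m + 1) / 2 = m * Real.pi + Real.pi / 2 := by ring
  rw [h, Real.sin_add_pi_div_two]
  have h0 : Real.sin ((m : ℝ) * Real.pi) = 0 := Real.sin_int_mul_pi m
  nlinarith [Real.sin_sq_add_cos_sq ((m : ℝ) * Real.pi)]

/-- An entire function of exponential type `π`, bounded on `ℝ`, vanishing to second
order at every even integer, is a constant multiple of `sin² (π z / 2)`. -/
theorem eq_const_mul_sin_sq_of_double_samples_vanish
    (f : ℂ → ℂ) (hf : Differentiable ℂ f)
    (C : ℝ) (hC : ∀ z : ℂ, ‖f z‖ ≤ C * Real.exp (Real.pi * |z.im|))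
    (M : ℝ) (hM : ∀ x : ℝ, ‖f (x : ℂ)‖ ≤ M)
    (hsamples : ∀ k : ℤ, f ((2 * k : ℤ) : ℂ) = 0 ∧ deriv f ((2 * k : ℤ) : ℂ) = 0) :
    ∃ c : ℂ, ∀ z : ℂ, f z = c * Complex.sin (Real.pi * z / 2) ^ 2 := by
  set s : ℂ → ℂ := fun z => Complex.sin (Real.pi * z / 2) with hs_def
  have hπ : (Real.pi : ℂ) ≠ 0 := Complex.ofReal_ne_zero.2 Real.pi_ne_zero
  have hs : Differentiable ℂ s :=
    Complex.differentiable_sin.comp ((differentiable_id.const_mul _).div_const 2)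
  have hzero : ∀ a : ℂ, s a = 0 → ∃ k : ℤ, a = 2 * k := by
    intro a ha
    obtain ⟨k, hk⟩ := Complex.sin_eq_zero_iff.1 ha
    exact ⟨k, mul_left_cancel₀ hπ (by linear_combination 2 * hk)⟩
  have hderiv_s : ∀ a : ℂ, HasDerivAt s (Complex.cos (Real.pi * a / 2) * (Real.pi / 2)) a := by
    intro a
    have h1 : HasDerivAt (fun z : ℂ => (Real.pi : ℂ) * z / 2) ((Real.pi : ℂ) / 2) a := by
      simpa using ((hasDerivAt_id a).const_mul (Real.pi : ℂ)).div_const 2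
    exact (Complex.hasDerivAt_sin _).comp a h1
  have hs' : ∀ a : ℂ, s a = 0 → deriv s a ≠ 0 := by
    intro a ha
    rw [(hderiv_s a).deriv]
    have hcos : Complex.cos (Real.pi * a / 2) ≠ 0 := by
      intro h
      have h2 := Complex.sin_sq_add_cos_sq ((Real.pi : ℂ) * a / 2)
      rw [h, show Complex.sin ((Real.pi : ℂ) * a / 2) = 0 from ha] at h2
      norm_num at h2
    exact mul_ne_zero hcos (div_ne_zero hπ two_ne_zero)
  have hf0 : ∀ a, s a = 0 → f a = 0 := by
    intro a ha
    obtain ⟨k, rfl⟩ := hzero a ha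
    simpa using (hsamples k).1
  have hf1 : ∀ a, s a = 0 → deriv f a = 0 := by
    intro a ha
    obtain ⟨k, rfl⟩ := hzero a ha
    simpa using (hsamples k).2
  obtain ⟨hh_diff, hh_eq⟩ := entire_div_of_zeros hf hs hf0 hs'
  set h : ℂ → ℂ := fun z => if s z = 0 then deriv f z / deriv s z else f z / s z with hh_def
  have hh0 : ∀ a, s a = 0 → h a = 0 := by
    intro a ha
    simp only [hh_def, if_pos ha, hf1 a ha, zero_div]
  obtain ⟨hg_diff, hg_eq⟩ := entire_div_of_zeros hh_diff hs hh0 hs'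
  set g : ℂ → ℂ := fun z => if s z = 0 then deriv h z / deriv s z else h z / s z with hg_def
  have hfg : ∀ z, f z = s z ^ 2 * g z := by
    intro z
    rw [sq, hh_eq z, mul_assoc, ← hg_eq z]
  have hs_norm : ∀ w : ℂ, ‖s w‖ ^ 2
      = Real.sin (Real.pi * w.re / 2) ^ 2 + Real.sinh (Real.pi * w.im / 2) ^ 2 := by
    intro w
    have h1 := norm_sin_sq_complex ((Real.pi : ℂ) * w / 2)
    have he : ((Real.pi : ℂ) * w / 2) = (↑(Real.pi / 2) : ℂ) * w := by push_cast; ring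
    have hre : ((Real.pi : ℂ) * w / 2).re = Real.pi * w.re / 2 := by
      rw [he]; simp [Complex.mul_re]; ring
    have him : ((Real.pi : ℂ) * w / 2).im = Real.pi * w.im / 2 := by
      rw [he]; simp [Complex.mul_im]; ring
    rw [hre, him] at h1
    exact h1
  have hCnn : 0 ≤ C := by
    have h1 := hC 0
    simpa using (norm_nonneg (f 0)).trans h1
  have hnorm_fg : ∀ z, ‖f z‖ = ‖s z‖ ^ 2 * ‖g z‖ := by
    intro z
    rw [hfg z, norm_mul, norm_pow]
  set d : ℝ := 1 - Real.exp (-Real.pi) with hd_def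
  have hd : 0 < d := by
    have h1 : Real.exp (-Real.pi) < 1 := Real.exp_lt_one_iff.2 (neg_lt_zero.2 Real.pi_pos)
    rw [hd_def]; linarith
  set m : ℝ := min (Real.sinh (Real.pi / 2)) 1 with hm_def
  have hm : 0 < m := lt_min (Real.sinh_pos_iff.2 (by positivity)) one_pos
  set B₁ : ℝ := 4 * C / d ^ 2 with hB₁_def
  set B₂ : ℝ := C * Real.exp Real.pi / m ^ 2 with hB₂_def
  -- bound outside the strip
  have hbound₁ : ∀ z : ℂ, 1 ≤ |z.im| → ‖g z‖ ≤ B₁ := by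
    intro z hz
    set t : ℝ := Real.pi * |z.im| / 2 with ht_def
    have htpos : Real.pi / 2 ≤ t := by
      rw [ht_def]; nlinarith [Real.pi_pos]
    have hsinh : Real.exp t * d / 2 ≤ Real.sinh t := by
      rw [Real.sinh_eq]
      have h1 : Real.exp (-t) ≤ Real.exp t * Real.exp (-Real.pi) := by
        rw [← Real.exp_add]
        exact Real.exp_le_exp.2 (by linarith)
      rw [hd_def]
      nlinarith [Real.exp_pos t]
    have hE : Real.exp (Real.pi * |z.im|) = Real.exp t ^ 2 := by
      rw [sq, ← Real.exp_add, ht_def]; ring_nf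
    have hsq : Real.exp (Real.pi * |z.im|) * d ^ 2 / 4 ≤ ‖s z‖ ^ 2 := by
      have h1 := hs_norm z
      have h2 : Real.sinh (Real.pi * z.im / 2) ^ 2 = Real.sinh t ^ 2 := by
        rcases abs_cases z.im with ⟨he, _⟩ | ⟨he, _⟩
        · rw [ht_def, he]
        · rw [ht_def, he]
          have h3 : Real.pi * -z.im / 2 = -(Real.pi * z.im / 2) := by ring
          rw [h3, Real.sinh_neg]
          ring
      rw [hE, h1, h2]
      have h4 : 0 < Real.exp t * d / 2 := by positivity
      nlinarith [sq_nonneg (Real.sin (Real.pi * z.re / 2)), h2, hsinh,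
        Real.exp_pos t, sq_nonneg (Real.sinh (Real.pi * z.im / 2))]
    have h5 := hC z
    have h6 := hnorm_fg z
    have hEpos : (0:ℝ) < Real.exp (Real.pi * |z.im|) := Real.exp_pos _
    have h8 : ‖g z‖ * (Real.exp (Real.pi * |z.im|) * d ^ 2 / 4)
        ≤ C * Real.exp (Real.pi * |z.im|) := by
      calc ‖g z‖ * (Real.exp (Real.pi * |z.im|) * d ^ 2 / 4)
          ≤ ‖g z‖ * ‖s z‖ ^ 2 := mul_le_mul_of_nonneg_left hsq (norm_nonneg _)
        _ = ‖f z‖ := by rw [h6]; ring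
        _ ≤ _ := h5
    rw [hB₁_def, le_div_iff₀ (by positivity)]
    refine (mul_le_mul_iff_of_pos_right hEpos).1 ?_
    ring_nf
    ring_nf at h8
    linarith [h8]
  -- bound inside the strip, via the maximum modulus principle
  have hbound₂ : ∀ z : ℂ, |z.im| ≤ 1 → ‖g z‖ ≤ B₂ := by
    intro z hz
    set k : ℤ := round (z.re / 2) with hk_def
    set U : Set ℂ := (Set.Ioo ((2*k:ℝ) - 1) (2*k+1)) ×ℂ (Set.Ioo (-1:ℝ) 1) with hU_def
    have hlt1 : ((2*k:ℝ) - 1) < 2*k+1 := by linarith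
    have hlt2 : (-1:ℝ) < 1 := by norm_num
    have hUb : IsBounded U := (Metric.isBounded_Ioo _ _).reProdIm (Metric.isBounded_Ioo _ _)
    have hzU : z ∈ closure U := by
      rw [hU_def, Complex.closure_reProdIm, closure_Ioo hlt1.ne, closure_Ioo hlt2.ne]
      have h1 := abs_sub_round (z.re / 2)
      rcases abs_le.1 h1 with ⟨h2, h3⟩
      rcases abs_le.1 hz with ⟨h4, h5⟩
      exact ⟨⟨by linarith, by linarith⟩, ⟨h4, h5⟩⟩
    have hfr : ∀ w ∈ frontier U, ‖g w‖ ≤ B₂ := by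
      intro w hw
      rw [hU_def, Complex.frontier_reProdIm, closure_Ioo hlt1.ne, closure_Ioo hlt2.ne,
        frontier_Ioo hlt1, frontier_Ioo hlt2] at hw
      have hmsq : m ^ 2 ≤ ‖s w‖ ^ 2 ∧ |w.im| ≤ 1 := by
        rcases hw with hw | hw
        · rcases hw with ⟨_, him⟩
          have hsinh2 : Real.sinh (Real.pi * w.im / 2) ^ 2 = Real.sinh (Real.pi / 2) ^ 2 := by
            rcases him with him | him
            · rw [show Real.pi * w.im / 2 = -(Real.pi / 2) by rw [him]; ring, Real.sinh_neg]
              ring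
            · rw [show Real.pi * w.im / 2 = Real.pi / 2 by rw [him]; ring]
          constructor
          · rw [hs_norm w, hsinh2]
            have hms : m ≤ Real.sinh (Real.pi / 2) := min_le_left _ _
            nlinarith [sq_nonneg (Real.sin (Real.pi * w.re / 2))]
          · rcases him with him | him <;> rw [him] <;> norm_num
        · rcases hw with ⟨hre, him⟩
          have hsin2 : Real.sin (Real.pi * w.re / 2) ^ 2 = 1 := by
            rcases hre with hre | hre
            · have : w.re = 2 * ((k : ℝ) - 1) + 1 := by rw [hre]; ring
              rw [this, show ((k:ℝ) - 1) = ((k - 1 : ℤ) : ℝ) by push_cast; ring]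
              exact sin_odd_sq (k - 1)
            · have : w.re = 2 * (k : ℝ) + 1 := by rw [hre]
              rw [this]
              exact sin_odd_sq k
          constructor
          · rw [hs_norm w, hsin2]
            have hm1 : m ≤ 1 := min_le_right _ _
            nlinarith [sq_nonneg (Real.sinh (Real.pi * w.im / 2))]
          · exact abs_le.2 ⟨him.1, him.2⟩
      obtain ⟨hmsq, himle⟩ := hmsq
      have h5 := hC w
      have h7 : C * Real.exp (Real.pi * |w.im|) ≤ C * Real.exp Real.pi := by
        have : Real.pi * |w.im| ≤ Real.pi := by nlinarith [Real.pi_pos, abs_nonneg w.im]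
        exact mul_le_mul_of_nonneg_left (Real.exp_le_exp.2 this) hCnn
      have h6 := hnorm_fg w
      rw [hB₂_def, le_div_iff₀ (by positivity)]
      nlinarith [norm_nonneg (g w), norm_nonneg (f w)]
    exact Complex.norm_le_of_forall_mem_frontier_norm_le hUb hg_diff.diffContOnCl hfr hzU
  have hrange : IsBounded (Set.range g) := by
    rw [isBounded_iff_forall_norm_le]
    refine ⟨max B₁ B₂, ?_⟩
    rintro x ⟨z, rfl⟩
    rcases le_total 1 |z.im| with hz | hz
    · exact (hbound₁ z hz).trans (le_max_left _ _)
    · exact (hbound₂ z hz).trans (le_max_right _ _)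
  obtain ⟨c, hc⟩ := hg_diff.exists_const_forall_eq_of_bounded hrange
  refine ⟨c, fun z => ?_⟩
  rw [hfg z, hc z]
  ring
end

section
/- For every positive integer τ, every point z on the topological boundary of the rectangle D_τ = {z ∈ ℂ : |Re z| ≤ 1 + 2τ, |Im z| ≤ 2} satisfies |sin(πz/2)| ≥ 1. -/
open Complex Real

/-- On the boundary of the rectangle `D_τ = {|Re z| ≤ 1 + 2τ, |Im z| ≤ 2}` (τ a positive
integer) one has `|sin (π z / 2)| ≥ 1`. -/
theorem one_le_abs_sin_on_boundary (τ : ℕ) (hτ : 0 < τ) (z : ℂ)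
    (hz : z ∈ frontier {w : ℂ | |w.re| ≤ 1 + 2 * (τ : ℝ) ∧ |w.im| ≤ 2}) :
    1 ≤ ‖Complex.sin (Real.pi * z / 2)‖ := by
  set a : ℝ := 1 + 2 * (τ : ℝ) with ha
  -- characterize the frontier
  have hS : IsClosed {w : ℂ | |w.re| ≤ a ∧ |w.im| ≤ 2} := by
    have h1 : IsClosed {w : ℂ | |w.re| ≤ a} :=
      isClosed_le (by continuity) continuous_const
    have h2 : IsClosed {w : ℂ | |w.im| ≤ 2} :=
      isClosed_le (by continuity) continuous_const
    exact h1.inter h2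
  have hmem : z ∈ {w : ℂ | |w.re| ≤ a ∧ |w.im| ≤ 2} := by
    have := hz.1
    rwa [hS.closure_eq] at this
  have hopen : IsOpen {w : ℂ | |w.re| < a ∧ |w.im| < 2} := by
    have h1 : IsOpen {w : ℂ | |w.re| < a} :=
      isOpen_lt (by continuity) continuous_const
    have h2 : IsOpen {w : ℂ | |w.im| < 2} :=
      isOpen_lt (by continuity) continuous_const
    exact h1.inter h2
  have hnot : ¬ (|z.re| < a ∧ |z.im| < 2) := by
    intro h
    have hsub : {w : ℂ | |w.re| < a ∧ |w.im| < 2} ⊆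
        interior {w : ℂ | |w.re| ≤ a ∧ |w.im| ≤ 2} :=
      interior_maximal (fun w hw => ⟨le_of_lt hw.1, le_of_lt hw.2⟩) hopen
    exact hz.2 (hsub h)
  have hcase : |z.re| = a ∨ |z.im| = 2 := by
    rcases lt_or_eq_of_le hmem.1 with h1 | h1
    · rcases lt_or_eq_of_le hmem.2 with h2 | h2
      · exact absurd ⟨h1, h2⟩ hnot
      · exact Or.inr h2
    · exact Or.inl h1
  -- compute the real and imaginary parts of π z / 2
  set u : ℝ := Real.pi / 2 * z.re with hu
  set v : ℝ := Real.pi / 2 * z.im with hv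
  have hw : (Real.pi : ℂ) * z / 2 = ((Real.pi / 2 : ℝ) : ℂ) * z := by
    push_cast; ring
  have hre : ((Real.pi : ℂ) * z / 2).re = u := by rw [hw, Complex.re_ofReal_mul]
  have him : ((Real.pi : ℂ) * z / 2).im = v := by rw [hw, Complex.im_ofReal_mul]
  have hsin : Complex.sin ((Real.pi : ℂ) * z / 2)
      = ((Real.sin u * Real.cosh v : ℝ) : ℂ) + ((Real.cos u * Real.sinh v : ℝ) : ℂ) * I := by
    rw [Complex.sin_eq, hre, him]
    push_cast
    simp [Complex.ofReal_sin, Complex.ofReal_cos, Complex.ofReal_cosh, Complex.ofReal_sinh]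
  have hsq : ‖Complex.sin ((Real.pi : ℂ) * z / 2)‖ ^ 2
      = Real.sin u ^ 2 + Real.sinh v ^ 2 := by
    rw [Complex.sq_norm, hsin, Complex.normSq_add_mul_I]
    nlinarith [Real.sin_sq_add_cos_sq u, Real.cosh_sq v]
  have habs : 0 ≤ ‖Complex.sin ((Real.pi : ℂ) * z / 2)‖ := norm_nonneg _
  have key : 1 ≤ Real.sin u ^ 2 + Real.sinh v ^ 2 := by
    rcases hcase with h | h
    · -- |Re z| = 1 + 2τ, so sin u = ±1
      have hpm : ((-1 : ℝ) ^ (τ : ℤ)) ^ 2 = 1 := by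
        rw [sq, ← zpow_add₀ (by norm_num : (-1:ℝ) ≠ 0)]
        exact Even.neg_one_zpow ⟨(τ : ℤ), rfl⟩
      have hsin1 : Real.sin u ^ 2 = 1 := by
        rcases abs_eq (by positivity : (0:ℝ) ≤ a) |>.mp h with h' | h'
        · have : u = Real.pi / 2 + (τ : ℤ) * Real.pi := by
            rw [hu, h', ha]; push_cast; ring
          rw [this, Real.sin_add_int_mul_pi, Real.sin_pi_div_two, mul_one]
          exact hpm
        · have : u = -(Real.pi / 2 + (τ : ℤ) * Real.pi) := by
            rw [hu, h', ha]; push_cast; ring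
          rw [this, Real.sin_neg, neg_sq, Real.sin_add_int_mul_pi, Real.sin_pi_div_two, mul_one]
          exact hpm
      nlinarith [sq_nonneg (Real.sinh v)]
    · -- |Im z| = 2, so sinh v = ± sinh π with sinh π > 1
      have hπ : (1 : ℝ) < Real.sinh Real.pi := by
        have h1 : Real.pi < Real.sinh Real.pi := Real.self_lt_sinh_iff.mpr Real.pi_pos
        linarith [Real.pi_gt_three]
      have hv2 : Real.sinh v ^ 2 = Real.sinh Real.pi ^ 2 := by
        rcases abs_eq (by norm_num : (0:ℝ) ≤ 2) |>.mp h with h' | h'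
        · rw [hv, h']; ring_nf
        · rw [hv, h']; rw [show Real.pi / 2 * (-2 : ℝ) = -Real.pi by ring, Real.sinh_neg]
          ring
      nlinarith [sq_nonneg (Real.sin u)]
  nlinarith [hsq, habs]
end
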